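/- arXiv:1512.04084 — 4 statements merged into one kernel-verified Lean document; each statement's English description precedes it below -/
import Mathlib

section
/- Let X be an ℕ-valued random variable such that X is TN_2 and range(X) = {0,1,...,r} for some positive integer r. Then for all n ∈ ℕ and all partitions λ and μ of n, λ dominates μ if and only if condition C(λ,μ,X) holds. -/
open Finset

noncomputable section

/-- The ℕ×ℕ Toeplitz matrix of a sequence `p`, with `(T_p)_{i,j} = p_{j-i}`
(and `0` when `j < i`, i.e. `p_n = 0` for negative `n`). -/
def toeplitz (p : ℕ → ℝ) : Matrix ℕ ℕ ℝ :=
  fun i j => if i ≤ j then p (j - i) else 0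

/-- A matrix is totally non-negative of order `k` iff every minor of size at
most `k` (rows and columns chosen strictly increasingly) is non-negative. -/
def IsTN (k : ℕ) (M : Matrix ℕ ℕ ℝ) : Prop :=
  ∀ l : ℕ, l ≤ k → ∀ r c : Fin l → ℕ, StrictMono r → StrictMono c →
    0 ≤ (M.submatrix r c).det

/-- A matrix is totally positive of order `k` iff every minor of size at
most `k` is positive. -/
def IsTP (k : ℕ) (M : Matrix ℕ ℕ ℝ) : Prop :=
  ∀ l : ℕ, l ≤ k → ∀ r c : Fin l → ℕ, StrictMono r → StrictMono c →
    0 < (M.submatrix r c).det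

/-- The matrix `S_p` with `(S_p)_{i,j} = (p^i)_j`, the coefficient of `x^j` in
`p(x)^i` where `p(x) = Σ p_n x^n` (and `p(x)^0 = 1`). -/
def sMatrix (p : ℕ → ℝ) : Matrix ℕ ℕ ℝ :=
  fun i j => PowerSeries.coeff j (PowerSeries.mk p ^ i)

/-- A partition: a non-increasing function from the positive integers to ℕ with
finite support (we set the irrelevant value at `0` to be `0`). -/
structure PartitionSeq where
  part : ℕ → ℕ
  zero : part 0 = 0
  antitone : ∀ ⦃i j : ℕ⦄, 1 ≤ i → i ≤ j → part j ≤ part i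
  finSupp : (Function.support part).Finite

/-- The weight `|λ|` of a partition. -/
def PartitionSeq.weight (lam : PartitionSeq) : ℕ := ∑ᶠ i, lam.part i

/-- `λ` dominates `μ`: equal weights and partial sums of `λ` are at least
those of `μ`. -/
def PartitionSeq.Dominates (lam mu : PartitionSeq) : Prop :=
  lam.weight = mu.weight ∧
  ∀ j : ℕ, 1 ≤ j →
    ∑ i ∈ Finset.Icc 1 j, mu.part i ≤ ∑ i ∈ Finset.Icc 1 j, lam.part i

/-- `f(λ, p(x), t, x) = ∏_i (p(x)^{λ(i)} |_t)`, the product over rows of the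
truncations to degree `t` of powers of the generating function. -/
def fPoly (lam : PartitionSeq) (p : ℕ → ℝ) (t : ℕ) : Polynomial ℝ :=
  ∏ᶠ i : ℕ, PowerSeries.trunc (t + 1) (PowerSeries.mk p ^ lam.part i)

/-- `P(E(λ,X,j,t))` for `X` with probability mass function `p`: the coefficient
of `x^j` in `∏_i ((p_X(x))^{λ(i)} |_t)`. -/
def probE (p : ℕ → ℝ) (lam : PartitionSeq) (j t : ℕ) : ℝ :=
  (fPoly lam p t).coeff j

/-- Condition `C(λ,μ,X)`: `P(E(λ,X,j,t)) ≤ P(E(μ,X,j,t))` for all `j, t ∈ ℕ`. -/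
def CondC (p : ℕ → ℝ) (lam mu : PartitionSeq) : Prop :=
  ∀ j t : ℕ, probE p lam j t ≤ probE p mu j t

namespace DomCond

/-- coefficient of `x^w` in `(Σ p_i x^i)^m` -/
def cf (p : ℕ → ℝ) (m w : ℕ) : ℝ := PowerSeries.coeff w ((PowerSeries.mk p) ^ m)

/-- ℤ-extended coefficients -/
def Cz (p : ℕ → ℝ) (m : ℕ) (w : ℤ) : ℝ := if 0 ≤ w then cf p m w.toNat else 0

lemma cf_zero (p : ℕ → ℝ) (w : ℕ) : cf p 0 w = if w = 0 then 1 else 0 := by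
  simp [cf, PowerSeries.coeff_one]

lemma cf_add (p : ℕ → ℝ) (m₁ m₂ w : ℕ) :
    cf p (m₁ + m₂) w = ∑ u ∈ range (w + 1), cf p m₁ u * cf p m₂ (w - u) := by
  simp only [cf, pow_add, PowerSeries.coeff_mul]
  exact Finset.Nat.sum_antidiagonal_eq_sum_range_succ_mk _ w

lemma cf_one (p : ℕ → ℝ) (w : ℕ) : cf p 1 w = p w := by
  simp [cf]

lemma cf_nonneg (p : ℕ → ℝ) (hnn : ∀ n, 0 ≤ p n) (m w : ℕ) : 0 ≤ cf p m w := by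
  induction m generalizing w with
  | zero => rw [cf_zero]; positivity
  | succ m ih =>
      rw [show m + 1 = 1 + m by ring, cf_add]
      exact Finset.sum_nonneg fun u _ => mul_nonneg (by rw [cf_one]; exact hnn u) (ih _)

lemma cf_eq_zero (p : ℕ → ℝ) (r : ℕ) (hr0 : ∀ w, r < w → p w = 0) (m w : ℕ)
    (hw : r * m < w) : cf p m w = 0 := by
  induction m generalizing w with
  | zero => rw [cf_zero, if_neg (by omega)]
  | succ m ih =>
      rw [show m + 1 = 1 + m by ring, cf_add]
      apply Finset.sum_eq_zero
      intro u _
      rcases le_or_gt u r with h | h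
      · have : r * m < w - u := by
          have hm : r * (m + 1) = r + r * m := by ring
          omega
        rw [ih _ this, mul_zero]
      · rw [cf_one, hr0 u h, zero_mul]

lemma cf_pos (p : ℕ → ℝ) (hnn : ∀ n, 0 ≤ p n) (r : ℕ)
    (hpos : ∀ w, w ≤ r → 0 < p w) (m w : ℕ) (hw : w ≤ r * m) : 0 < cf p m w := by
  induction m generalizing w with
  | zero =>
      have : w = 0 := by omega
      rw [cf_zero, this]; norm_num
  | succ m ih =>
      rw [show m + 1 = 1 + m by ring, cf_add]
      set x := min w r with hx
      have hxw : x ≤ w := min_le_left _ _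
      have hterm : 0 < cf p 1 x * cf p m (w - x) := by
        apply mul_pos
        · rw [cf_one]; exact hpos x (min_le_right _ _)
        · apply ih
          have hm : r * (m + 1) = r + r * m := by ring
          omega
      have hmem : x ∈ range (w + 1) := by simp only [Finset.mem_range]; omega
      apply lt_of_lt_of_le hterm
      apply Finset.single_le_sum (f := fun u => cf p 1 u * cf p m (w - u))
        (fun u _ => mul_nonneg (cf_nonneg p hnn 1 u) (cf_nonneg p hnn m _)) hmem

lemma Cz_nonneg (p : ℕ → ℝ) (hnn : ∀ n, 0 ≤ p n) (m : ℕ) (w : ℤ) : 0 ≤ Cz p m w := by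
  unfold Cz; split
  · exact cf_nonneg p hnn m _
  · exact le_refl 0

lemma Cz_neg (p : ℕ → ℝ) (m : ℕ) {w : ℤ} (hw : w < 0) : Cz p m w = 0 := by
  unfold Cz; rw [if_neg (by omega)]

lemma Cz_of_nonneg (p : ℕ → ℝ) (m : ℕ) {w : ℤ} (hw : 0 ≤ w) : Cz p m w = cf p m w.toNat := by
  unfold Cz; rw [if_pos hw]

lemma Cz_coe (p : ℕ → ℝ) (m : ℕ) (w : ℕ) : Cz p m (w : ℤ) = cf p m w := by
  rw [Cz_of_nonneg p m (by positivity)]; simp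

lemma Cz_hi (p : ℕ → ℝ) (r : ℕ) (hr0 : ∀ w, r < w → p w = 0) (m : ℕ) {w : ℤ}
    (hw : (r * m : ℤ) < w) : Cz p m w = 0 := by
  have h0 : (0:ℤ) ≤ w := le_trans (by positivity) (le_of_lt hw)
  rw [Cz_of_nonneg p m h0]
  apply cf_eq_zero p r hr0
  omega

lemma sum_Ioc_split (f : ℤ → ℝ) {a b c : ℤ} (h1 : a ≤ b) (h2 : b ≤ c) :
    ∑ i ∈ Ioc a c, f i = ∑ i ∈ Ioc a b, f i + ∑ i ∈ Ioc b c, f i := by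
  rw [← Finset.Ioc_union_Ioc_eq_Ioc h1 h2, Finset.sum_union]
  rw [Finset.disjoint_left]
  intro x hx hx'
  simp only [Finset.mem_Ioc] at hx hx'
  omega

lemma sum_Icc_int_eq (g : ℤ → ℝ) (B : ℕ) :
    ∑ s ∈ Icc (0:ℤ) B, g s = ∑ u ∈ range (B+1), g u := by
  refine Finset.sum_nbij' (fun s => s.toNat) (fun u => (u : ℤ)) ?_ ?_ ?_ ?_ ?_
  · intro a ha; simp only [Finset.mem_Icc] at ha; simp only [Finset.mem_range]; omega
  · intro a ha; simp only [Finset.mem_range] at ha; simp only [Finset.mem_Icc]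
    constructor
    · exact Int.ofNat_nonneg a
    · omega
  · intro a ha; simp only [Finset.mem_Icc] at ha
    show ((a.toNat : ℤ)) = a; omega
  · intro a ha; simp only [Finset.mem_range] at ha
    show (a : ℤ).toNat = a; omega
  · intro a ha; simp only [Finset.mem_Icc] at ha
    show g a = g ((a.toNat : ℤ)); congr 1; omega

/-- sum over an interval shifts -/
lemma sum_Ioc_shift (f : ℤ → ℝ) (a b x : ℤ) :
    ∑ s ∈ Ioc a b, f (s - x) = ∑ y ∈ Ioc (a - x) (b - x), f y := by
  refine Finset.sum_nbij' (fun s => s - x) (fun y => y + x) ?_ ?_ ?_ ?_ ?_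
  · intro s hs; simp only [Finset.mem_Ioc] at *; omega
  · intro y hy; simp only [Finset.mem_Ioc] at *; omega
  · intro s _; ring
  · intro y _; ring
  · intro s _; rfl

lemma Cz_conv (p : ℕ → ℝ) (r : ℕ) (hr0 : ∀ w, r < w → p w = 0) (m₁ m₂ : ℕ) (w : ℤ) :
    Cz p (m₁ + m₂) w = ∑ x ∈ Icc (0:ℤ) ((r * m₁ : ℕ) : ℤ), Cz p m₁ x * Cz p m₂ (w - x) := by
  rcases lt_or_ge w 0 with hw | hw
  · rw [Cz_neg p _ hw]
    symm; apply Finset.sum_eq_zero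
    intro x hx
    simp only [Finset.mem_Icc] at hx
    rw [Cz_neg p m₂ (by omega), mul_zero]
  · set wn := w.toNat with hwn
    have hw' : (wn : ℤ) = w := by omega
    have step1 : Cz p (m₁ + m₂) w = ∑ u ∈ range (wn + 1), cf p m₁ u * cf p m₂ (wn - u) := by
      rw [Cz_of_nonneg p _ hw]; exact cf_add p m₁ m₂ wn
    have step2 : ∑ x ∈ Icc (0:ℤ) (wn : ℤ), Cz p m₁ x * Cz p m₂ (w - x)
        = ∑ u ∈ range (wn + 1), cf p m₁ u * cf p m₂ (wn - u) := by
      rw [sum_Icc_int_eq (fun x => Cz p m₁ x * Cz p m₂ (w - x)) wn]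
      apply Finset.sum_congr rfl
      intro u hu
      simp only [Finset.mem_range] at hu
      rw [Cz_coe, Cz_of_nonneg p m₂ (by omega)]
      congr 2
      omega
    set D : ℤ := max w ((r * m₁ : ℕ) : ℤ) with hD
    have ext1 : ∑ x ∈ Icc (0:ℤ) (wn : ℤ), Cz p m₁ x * Cz p m₂ (w - x)
        = ∑ x ∈ Icc (0:ℤ) D, Cz p m₁ x * Cz p m₂ (w - x) := by
      apply Finset.sum_subset
      · apply Finset.Icc_subset_Icc_right; omega
      · intro x hx hx'
        simp only [Finset.mem_Icc] at hx hx'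
        rw [Cz_neg p m₂ (by omega), mul_zero]
    have ext2 : ∑ x ∈ Icc (0:ℤ) ((r * m₁ : ℕ) : ℤ), Cz p m₁ x * Cz p m₂ (w - x)
        = ∑ x ∈ Icc (0:ℤ) D, Cz p m₁ x * Cz p m₂ (w - x) := by
      apply Finset.sum_subset
      · apply Finset.Icc_subset_Icc_right; omega
      · intro x hx hx'
        simp only [Finset.mem_Icc] at hx hx'
        rw [Cz_hi p r hr0 m₁ (by push_cast; omega), zero_mul]
    rw [step1, ← step2, ext1, ← ext2]

lemma Cz_succ (p : ℕ → ℝ) (r : ℕ) (hr0 : ∀ w, r < w → p w = 0) (m : ℕ) (w : ℤ) :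
    Cz p (m + 1) w = ∑ x ∈ Icc (0:ℤ) (r : ℤ), Cz p 1 x * Cz p m (w - x) := by
  have := Cz_conv p r hr0 1 m w
  rw [add_comm 1 m] at this
  simpa using this

/-- TP₂-type inequality family for a ℤ-indexed sequence. -/
def Tp2 (C : ℤ → ℝ) : Prop :=
  ∀ a b a' b' : ℤ, a + b = a' + b' → a' ≤ a → a' ≤ b → C a' * C b' ≤ C a * C b

lemma tp2_of_le (C : ℤ → ℝ)
    (h : ∀ a b a' b' : ℤ, a + b = a' + b' → a' ≤ a → a' ≤ b → a ≤ b →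
      C a' * C b' ≤ C a * C b) : Tp2 C := by
  intro a b a' b' hsum ha hb
  rcases le_total a b with hab | hab
  · exact h a b a' b' hsum ha hb hab
  · have := h b a a' b' (by omega) hb ha hab
    linarith [this]

lemma mono2 {x y : ℕ} (h : x < y) : StrictMono ![x, y] := by
  intro i j hij
  fin_cases i <;> fin_cases j <;> simp_all <;> omega

lemma tp2_P (p : ℕ → ℝ) (hnn : ∀ n, 0 ≤ p n) (r : ℕ) (hr0 : ∀ w, r < w → p w = 0)
    (hTN : IsTN 2 (toeplitz p)) : Tp2 (Cz p 1) := by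
  apply tp2_of_le
  intro a b a' b' hsum ha' hb' hab
  have hnnz : ∀ w : ℤ, 0 ≤ Cz p 1 w := Cz_nonneg p hnn 1
  rcases lt_or_ge a' 0 with h1 | h1
  · rw [Cz_neg p 1 h1, zero_mul]
    exact mul_nonneg (hnnz a) (hnnz b)
  rcases lt_or_ge (r : ℤ) b' with h2 | h2
  · rw [show Cz p 1 b' = 0 from Cz_hi p r hr0 1 (by push_cast; omega), mul_zero]
    exact mul_nonneg (hnnz a) (hnnz b)
  -- now 0 ≤ a' ≤ a ≤ b ≤ b' ≤ r
  rcases eq_or_lt_of_le ha' with rfl | ha'lt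
  · have : b = b' := by omega
    rw [this]
  · -- use the TN₂ hypothesis
    have hb'b : b < b' := by omega
    have hab' : a < b' := by omega
    set d : ℕ := (a - a').toNat with hd
    have hd0 : 0 < d := by omega
    have hdet := hTN 2 (le_refl 2) ![0, d] ![a.toNat, b'.toNat] (mono2 hd0)
      (mono2 (by omega))
    rw [Matrix.det_fin_two] at hdet
    simp only [Matrix.submatrix_apply] at hdet
    have e00 : toeplitz p (![0, d] 0) (![a.toNat, b'.toNat] 0) = p a.toNat := by
      simp [toeplitz]
    have e01 : toeplitz p (![0, d] 0) (![a.toNat, b'.toNat] 1) = p b'.toNat := by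
      simp [toeplitz]
    have e10 : toeplitz p (![0, d] 1) (![a.toNat, b'.toNat] 0) = p a'.toNat := by
      show (if d ≤ a.toNat then p (a.toNat - d) else 0) = p a'.toNat
      rw [if_pos (by omega)]
      congr 1
      omega
    have e11 : toeplitz p (![0, d] 1) (![a.toNat, b'.toNat] 1) = p b.toNat := by
      show (if d ≤ b'.toNat then p (b'.toNat - d) else 0) = p b.toNat
      rw [if_pos (by omega)]
      congr 1
      omega
    rw [e00, e01, e10, e11] at hdet
    rw [Cz_of_nonneg p 1 h1, Cz_of_nonneg p 1 (by omega : (0:ℤ) ≤ b'),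
        Cz_of_nonneg p 1 (by omega : (0:ℤ) ≤ a), Cz_of_nonneg p 1 (by omega : (0:ℤ) ≤ b)]
    rw [cf_one, cf_one, cf_one, cf_one]
    linarith

lemma sum_Icc_shift (f : ℤ → ℝ) (a b x : ℤ) :
    ∑ s ∈ Icc a b, f (s - x) = ∑ y ∈ Icc (a - x) (b - x), f y := by
  refine Finset.sum_nbij' (fun s => s - x) (fun y => y + x) ?_ ?_ ?_ ?_ ?_
  · intro s hs; simp only [Finset.mem_Icc] at *; omega
  · intro y hy; simp only [Finset.mem_Icc] at *; omega
  · intro s _; ring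
  · intro y _; ring
  · intro s _; rfl

lemma lagrange_ineq (S : Finset ℤ) (f₁ f₂ g₁ g₂ : ℤ → ℝ)
    (key : ∀ k ∈ S, ∀ k' ∈ S,
      0 ≤ (f₁ k * f₂ k' - f₁ k' * f₂ k) * (g₁ k * g₂ k' - g₁ k' * g₂ k)) :
    (∑ k ∈ S, f₂ k * g₁ k) * (∑ k ∈ S, f₁ k * g₂ k) ≤
      (∑ k ∈ S, f₁ k * g₁ k) * (∑ k ∈ S, f₂ k * g₂ k) := by
  have h2 : 0 ≤ ∑ k ∈ S, ∑ k' ∈ S,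
      (f₁ k * f₂ k' - f₁ k' * f₂ k) * (g₁ k * g₂ k' - g₁ k' * g₂ k) :=
    Finset.sum_nonneg fun k hk => Finset.sum_nonneg fun k' hk' => key k hk k' hk'
  have e1 : ∀ u v : ℤ → ℝ, (∑ k ∈ S, u k) * (∑ k ∈ S, v k) = ∑ k ∈ S, ∑ k' ∈ S, u k * v k' :=
    fun u v => Finset.sum_mul_sum S S u v
  set P : ℤ → ℤ → ℝ := fun k k' =>
    (f₁ k * g₁ k) * (f₂ k' * g₂ k') - (f₂ k * g₁ k) * (f₁ k' * g₂ k') with hP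
  have hdiff : (∑ k ∈ S, f₁ k * g₁ k) * (∑ k ∈ S, f₂ k * g₂ k) -
      (∑ k ∈ S, f₂ k * g₁ k) * (∑ k ∈ S, f₁ k * g₂ k) = ∑ k ∈ S, ∑ k' ∈ S, P k k' := by
    rw [e1, e1, ← Finset.sum_sub_distrib]
    apply Finset.sum_congr rfl
    intro k _
    rw [← Finset.sum_sub_distrib]
  have hswap : ∑ k ∈ S, ∑ k' ∈ S, P k' k = ∑ k ∈ S, ∑ k' ∈ S, P k k' := Finset.sum_comm
  have hcomb : ∑ k ∈ S, ∑ k' ∈ S,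
      (f₁ k * f₂ k' - f₁ k' * f₂ k) * (g₁ k * g₂ k' - g₁ k' * g₂ k)
      = ∑ k ∈ S, ∑ k' ∈ S, (P k k' + P k' k) := by
    apply Finset.sum_congr rfl; intro k _
    apply Finset.sum_congr rfl; intro k' _
    simp only [hP]; ring
  have hsplit : ∑ k ∈ S, ∑ k' ∈ S, (P k k' + P k' k)
      = (∑ k ∈ S, ∑ k' ∈ S, P k k') + (∑ k ∈ S, ∑ k' ∈ S, P k' k) := by
    rw [← Finset.sum_add_distrib]
    apply Finset.sum_congr rfl; intro k _
    rw [← Finset.sum_add_distrib]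
  rw [hcomb, hsplit, hswap] at h2
  linarith [h2, hdiff]

lemma tp2_conv (P C : ℤ → ℝ) (R : ℤ) (hR : 0 ≤ R) (hPlo : ∀ x : ℤ, x < 0 → P x = 0)
    (hPhi : ∀ x : ℤ, R < x → P x = 0) (hP : Tp2 P) (hC : Tp2 C) :
    Tp2 (fun w => ∑ x ∈ Icc (0:ℤ) R, P x * C (w - x)) := by
  apply tp2_of_le
  intro a b a' b' hsum ha' hb' hab
  set A : ℤ → ℝ := fun w => ∑ x ∈ Icc (0:ℤ) R, P x * C (w - x) with hA
  set d : ℤ := a - a' with hd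
  have hd0 : 0 ≤ d := by omega
  have hb' : b' = b + d := by omega
  set S : Finset ℤ := Icc (0:ℤ) (R + d) with hS
  set f₁ : ℤ → ℝ := fun k => P k with hf₁
  set f₂ : ℤ → ℝ := fun k => P (k - d) with hf₂
  set g₁ : ℤ → ℝ := fun k => C (a - k) with hg₁
  set g₂ : ℤ → ℝ := fun k => C (b + d - k) with hg₂
  have hsub : Icc (0:ℤ) R ⊆ S := Finset.Icc_subset_Icc_right (by omega)
  have hAa : A a = ∑ k ∈ S, f₁ k * g₁ k := by
    apply Finset.sum_subset hsub
    intro x hx hx'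
    rw [hS] at hx
    simp only [Finset.mem_Icc] at hx hx'
    show P x * C (a - x) = 0
    rw [hPhi x (by omega), zero_mul]
  have hAb' : A b' = ∑ k ∈ S, f₁ k * g₂ k := by
    rw [hA]; simp only
    rw [hb']
    apply Finset.sum_subset hsub
    intro x hx hx'
    rw [hS] at hx
    simp only [Finset.mem_Icc] at hx hx'
    show P x * C (b + d - x) = 0
    rw [hPhi x (by omega), zero_mul]
  have shift_eq : ∀ w : ℤ, ∑ k ∈ S, P (k - d) * C (w + d - k) = A w := by
    intro w
    have : ∀ k : ℤ, P (k - d) * C (w + d - k) = (fun y => P y * C (w - y)) (k - d) := by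
      intro k; simp only; congr 2; ring
    rw [Finset.sum_congr rfl fun k _ => this k]
    rw [sum_Icc_shift (fun y => P y * C (w - y)) 0 (R + d) d]
    have : Icc (0 - d) (R + d - d) = Icc (0 - d) R := by congr 1; ring
    rw [this]
    rw [hA]; simp only
    symm
    apply Finset.sum_subset (Finset.Icc_subset_Icc_left (by omega))
    intro x hx hx'
    simp only [Finset.mem_Icc] at hx hx'
    rw [hPlo x (by omega), zero_mul]
  have hAb : A b = ∑ k ∈ S, f₂ k * g₂ k := (shift_eq b).symm
  have hAa' : A a' = ∑ k ∈ S, f₂ k * g₁ k := by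
    have := shift_eq (a - d)
    have ha'' : a - d + d = a := by ring
    rw [ha''] at this
    rw [show a' = a - d by omega]
    exact this.symm
  show A a' * A b' ≤ A a * A b
  rw [hAa, hAb, hAa', hAb']
  apply lagrange_ineq
  intro k hk k' hk'
  rcases le_total k k' with hkk | hkk
  · apply mul_nonneg
    · have := hP k (k' - d) (k - d) k' (by ring) (by omega) (by omega)
      simp only [hf₁, hf₂]; linarith
    · have := hC (a - k) (b + d - k') (a - k') (b + d - k) (by ring) (by omega) (by omega)
      simp only [hg₁, hg₂]; linarith
  · have h1 : f₁ k' * f₂ k - f₁ k * f₂ k' ≥ 0 := by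
      have := hP k' (k - d) (k' - d) k (by ring) (by omega) (by omega)
      show P k' * P (k - d) - P k * P (k' - d) ≥ 0
      linarith
    have h2 : g₁ k' * g₂ k - g₁ k * g₂ k' ≥ 0 := by
      have := hC (a - k') (b + d - k) (a - k) (b + d - k') (by ring) (by omega) (by omega)
      show C (a - k') * C (b + d - k) - C (a - k) * C (b + d - k') ≥ 0
      linarith
    have e : (f₁ k * f₂ k' - f₁ k' * f₂ k) * (g₁ k * g₂ k' - g₁ k' * g₂ k)
        = (f₁ k' * f₂ k - f₁ k * f₂ k') * (g₁ k' * g₂ k - g₁ k * g₂ k') := by ring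
    rw [e]
    exact mul_nonneg h1 h2

lemma tp2_zero (p : ℕ → ℝ) : Tp2 (Cz p 0) := by
  intro a b a' b' hsum ha' hb'
  rcases eq_or_ne a' 0 with rfl | h1
  · rcases eq_or_ne b' 0 with rfl | h2
    · have ha : 0 ≤ a := ha'
      have hb : 0 ≤ b := hb'
      have : a = 0 ∧ b = 0 := by omega
      rw [this.1, this.2]
    · have : Cz p 0 b' = 0 := by
        rcases lt_or_ge b' 0 with h | h
        · exact Cz_neg p 0 h
        · rw [Cz_of_nonneg p 0 h, cf_zero, if_neg (by omega)]
      rw [this, mul_zero]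
      have h0 : Cz p 0 0 = 1 := by rw [Cz_of_nonneg p 0 le_rfl, cf_zero]; simp
      rcases lt_or_ge a 0 with h | h
      · rw [Cz_neg p 0 h, zero_mul]
      · rcases eq_or_ne a 0 with rfl | ha
        · rcases eq_or_ne b 0 with rfl | hb
          · rw [h0]; norm_num
          · rw [show Cz p 0 b = 0 by
              rcases lt_or_ge b 0 with h | h
              · exact Cz_neg p 0 h
              · rw [Cz_of_nonneg p 0 h, cf_zero, if_neg (by omega)], mul_zero]
        · rw [show Cz p 0 a = 0 by
            rw [Cz_of_nonneg p 0 h, cf_zero, if_neg (by omega)], zero_mul]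
  · have : Cz p 0 a' = 0 := by
      rcases lt_or_ge a' 0 with h | h
      · exact Cz_neg p 0 h
      · rw [Cz_of_nonneg p 0 h, cf_zero, if_neg (by omega)]
    rw [this, zero_mul]
    rcases lt_or_ge a 0 with h | h
    · rw [Cz_neg p 0 h, zero_mul]
    · rcases lt_or_ge b 0 with hb | hb
      · rw [Cz_neg p 0 hb, mul_zero]
      · rw [Cz_of_nonneg p 0 h, Cz_of_nonneg p 0 hb]
        rw [cf_zero, cf_zero]
        split_ifs <;> norm_num

lemma tp2_congr {C C' : ℤ → ℝ} (h : ∀ w, C w = C' w) (hC : Tp2 C) : Tp2 C' := by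
  intro a b a' b' hs h1 h2
  rw [← h, ← h, ← h, ← h]
  exact hC a b a' b' hs h1 h2

lemma Cz_tp2 (p : ℕ → ℝ) (hnn : ∀ n, 0 ≤ p n) (r : ℕ) (hr0 : ∀ w, r < w → p w = 0)
    (hTN : IsTN 2 (toeplitz p)) (m : ℕ) : Tp2 (Cz p m) := by
  induction m with
  | zero => exact tp2_zero p
  | succ m ih =>
      apply tp2_congr (C := fun w => ∑ x ∈ Icc (0:ℤ) (r:ℤ), Cz p 1 x * Cz p m (w - x))
      · intro w
        exact (Cz_succ p r hr0 m w).symm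
      · exact tp2_conv (Cz p 1) (Cz p m) (r:ℤ) (by positivity)
          (fun x hx => Cz_neg p 1 hx)
          (fun x hx => Cz_hi p r hr0 1 (by push_cast; omega))
          (tp2_P p hnn r hr0 hTN) ih

lemma Cz_lr (p : ℕ → ℝ) (hnn : ∀ n, 0 ≤ p n) (r : ℕ) (hr0 : ∀ w, r < w → p w = 0)
    (hTN : IsTN 2 (toeplitz p)) {m m' : ℕ} (hmm : m' ≤ m) {s s' : ℤ} (hss : s' ≤ s) :
    Cz p m' s * Cz p m s' ≤ Cz p m s * Cz p m' s' := by
  obtain ⟨m'', rfl⟩ : ∃ m'', m = m'' + m' := ⟨m - m', by omega⟩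
  rw [Cz_conv p r hr0 m'' m' s, Cz_conv p r hr0 m'' m' s']
  rw [Finset.sum_mul, Finset.mul_sum]
  apply Finset.sum_le_sum
  intro y hy
  simp only [Finset.mem_Icc] at hy
  have htp := Cz_tp2 p hnn r hr0 hTN m' (s - y) s' (s' - y) s (by ring) (by omega) (by omega)
  have hnn'' : 0 ≤ Cz p m'' y := Cz_nonneg p hnn m'' y
  calc Cz p m' s * (Cz p m'' y * Cz p m' (s' - y))
      = Cz p m'' y * (Cz p m' (s' - y) * Cz p m' s) := by ring
    _ ≤ Cz p m'' y * (Cz p m' (s - y) * Cz p m' s') := by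
        apply mul_le_mul_of_nonneg_left _ hnn''
        linarith
    _ = Cz p m'' y * Cz p m' (s - y) * Cz p m' s' := by ring

/-- The key single-move inequality, in ℤ-indexed form. -/
lemma key_sum (p : ℕ → ℝ) (hnn : ∀ n, 0 ≤ p n) (r : ℕ) (hr0 : ∀ w, r < w → p w = 0)
    (hTN : IsTN 2 (toeplitz p)) (k l : ℕ) (hl : 1 ≤ l) (hkl : l ≤ k) (t : ℕ) (j : ℤ) :
    ∑ s ∈ Icc (j - t) (t:ℤ), Cz p (k+1) s * Cz p (l-1) (j - s)
      ≤ ∑ s ∈ Icc (j - t) (t:ℤ), Cz p k s * Cz p l (j - s) := by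
  rcases lt_or_ge (2 * (t:ℤ)) j with hj | hj
  · rw [Finset.Icc_eq_empty (by omega)]
    simp
  -- main case : j ≤ 2t
  set M : ℤ := (r : ℤ) * (k + l + 2) with hM
  have hM0 : 0 ≤ M := by positivity
  set hi : ℤ := (t:ℤ) + M + r + 1 + max 0 j with hhi
  set lo : ℤ := j - hi with hlo
  have hlo1 : lo ≤ -1 := by
    have : (0:ℤ) ≤ max 0 j := le_max_left 0 j
    have : j ≤ max 0 j := le_max_right 0 j
    omega
  have hlojt : lo ≤ j - t - 1 := by omega
  have hjt : j - t - 1 ≤ (t:ℤ) := by omega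
  have hthi : (t:ℤ) ≤ hi := by
    have : (0:ℤ) ≤ max 0 j := le_max_left 0 j
    omega
  have hzero_out : ∀ (m : ℕ) (s : ℤ), m ≤ k + l + 2 → ((r:ℤ) * m < s ∨ s < 0) →
      Cz p m s = 0 := by
    intro m s hm hs
    rcases hs with hs | hs
    · exact Cz_hi p r hr0 m (by push_cast; omega)
    · exact Cz_neg p m hs
  have hrmM : ∀ m : ℕ, m ≤ k + l + 2 → (r:ℤ) * m ≤ M := by
    intro m hm
    rw [hM]
    have : (m:ℤ) ≤ (k + l + 2 : ℤ) := by exact_mod_cast hm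
    nlinarith [Int.ofNat_nonneg r]
  -- total sums
  have tot : ∀ m m' : ℕ, m + m' ≤ k + l + 2 →
      ∑ s ∈ Ioc lo hi, Cz p m s * Cz p m' (j - s) = Cz p (m + m') j := by
    intro m m' hmm
    rw [Cz_conv p r hr0 m m' j]
    symm
    apply Finset.sum_subset
    · intro s hs
      simp only [Finset.mem_Icc] at hs
      simp only [Finset.mem_Ioc]
      have h1 : ((r * m : ℕ) : ℤ) = (r:ℤ) * m := by push_cast; ring
      have h2 : (r:ℤ) * m ≤ M := hrmM m (by omega)
      constructor
      · omega
      · omega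
    · intro s hs hs'
      simp only [Finset.mem_Icc] at hs'
      have h1 : ((r * m : ℕ) : ℤ) = (r:ℤ) * m := by push_cast; ring
      rcases lt_or_ge s 0 with h | h
      · rw [Cz_neg p m h, zero_mul]
      · rw [hzero_out m s (by omega) (Or.inl (by omega)), zero_mul]
  -- tail sums
  set U : ℕ → ℕ → ℝ := fun m m' => ∑ s ∈ Ioc (t:ℤ) hi, Cz p m s * Cz p m' (j - s) with hU
  -- reflection: low tail equals upper tail with roles swapped
  have refl_eq : ∀ m m' : ℕ, m ≤ k + l + 2 → m' ≤ k + l + 2 →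
      ∑ s ∈ Ioc lo (j - t - 1), Cz p m s * Cz p m' (j - s) = U m' m := by
    intro m m' hm hm'
    have step : ∑ s ∈ Ioc lo (j - t - 1), Cz p m s * Cz p m' (j - s)
        = ∑ s' ∈ Ioc (t:ℤ) (hi - 1), Cz p m' s' * Cz p m (j - s') := by
      refine Finset.sum_nbij' (fun s => j - s) (fun s' => j - s') ?_ ?_ ?_ ?_ ?_
      · intro s hs; simp only [Finset.mem_Ioc] at *; omega
      · intro s' hs'; simp only [Finset.mem_Ioc] at *; omega
      · intro s _; show j - (j - s) = s; ring
      · intro s' _; show j - (j - s') = s'; ring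
      · intro s _
        show Cz p m s * Cz p m' (j - s) = Cz p m' (j - s) * Cz p m (j - (j - s))
        have h9 : j - (j - s) = s := by ring
        rw [h9, mul_comm]
    rw [step]
    show _ = ∑ s ∈ Ioc (t:ℤ) hi, Cz p m' s * Cz p m (j - s)
    apply Finset.sum_subset
    · apply Finset.Ioc_subset_Ioc_right; omega
    · intro s hs hs'
      simp only [Finset.mem_Ioc] at hs hs'
      have : hi - 1 < s := by omega
      have hrm : (r:ℤ) * m' ≤ M := hrmM m' hm'
      rw [hzero_out m' s hm' (Or.inl (by omega)), zero_mul]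
  -- window sums
  set W : ℕ → ℕ → ℤ → ℝ :=
    fun m m' x => ∑ y ∈ Ioc ((t:ℤ) - x) (t:ℤ), Cz p m y * Cz p m' (j - x - y) with hW
  -- step identity
  have Ustep : ∀ m m' : ℕ, m ≤ k + l → m' ≤ k + l →
      U (m+1) m' = U m (m'+1) + ∑ x ∈ Icc (0:ℤ) (r:ℤ), Cz p 1 x * W m m' x := by
    intro m m' hm hm'
    have expand1 : U (m+1) m' = ∑ x ∈ Icc (0:ℤ) (r:ℤ), Cz p 1 x *
        ∑ s ∈ Ioc (t:ℤ) hi, Cz p m (s - x) * Cz p m' (j - s) := by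
      show (∑ s ∈ Ioc (t:ℤ) hi, Cz p (m+1) s * Cz p m' (j - s)) = _
      rw [Finset.sum_congr rfl (fun s _ => by rw [Cz_succ p r hr0 m s, Finset.sum_mul])]
      rw [Finset.sum_comm]
      apply Finset.sum_congr rfl
      intro x _
      rw [Finset.mul_sum]
      apply Finset.sum_congr rfl
      intro s _
      ring
    have expand2 : U m (m'+1) = ∑ x ∈ Icc (0:ℤ) (r:ℤ), Cz p 1 x *
        ∑ s ∈ Ioc (t:ℤ) hi, Cz p m s * Cz p m' (j - s - x) := by
      show (∑ s ∈ Ioc (t:ℤ) hi, Cz p m s * Cz p (m'+1) (j - s)) = _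
      rw [Finset.sum_congr rfl (fun s _ => by rw [Cz_succ p r hr0 m' (j - s), Finset.mul_sum])]
      rw [Finset.sum_comm]
      apply Finset.sum_congr rfl
      intro x _
      rw [Finset.mul_sum]
      apply Finset.sum_congr rfl
      intro s _
      ring
    rw [expand1, expand2, ← Finset.sum_add_distrib]
    apply Finset.sum_congr rfl
    intro x hx
    simp only [Finset.mem_Icc] at hx
    rw [← mul_add]
    congr 1
    -- shift the first inner sum
    have sh : ∑ s ∈ Ioc (t:ℤ) hi, Cz p m (s - x) * Cz p m' (j - s)
        = ∑ y ∈ Ioc ((t:ℤ) - x) (hi - x), Cz p m y * Cz p m' (j - x - y) := by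
      have : ∀ s : ℤ, Cz p m (s - x) * Cz p m' (j - s)
          = (fun y => Cz p m y * Cz p m' (j - x - y)) (s - x) := by
        intro s; simp only; congr 2; ring
      rw [Finset.sum_congr rfl (fun s _ => this s)]
      exact sum_Ioc_shift (fun y => Cz p m y * Cz p m' (j - x - y)) t hi x
    rw [sh]
    have split : ∑ y ∈ Ioc ((t:ℤ) - x) (hi - x), Cz p m y * Cz p m' (j - x - y)
        = ∑ y ∈ Ioc ((t:ℤ) - x) (t:ℤ), Cz p m y * Cz p m' (j - x - y)
          + ∑ y ∈ Ioc (t:ℤ) (hi - x), Cz p m y * Cz p m' (j - x - y) := by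
      rw [← sum_Ioc_split]
      · omega
      · omega
    rw [split]
    have ext : ∑ y ∈ Ioc (t:ℤ) (hi - x), Cz p m y * Cz p m' (j - x - y)
        = ∑ y ∈ Ioc (t:ℤ) hi, Cz p m y * Cz p m' (j - x - y) := by
      apply Finset.sum_subset
      · apply Finset.Ioc_subset_Ioc_right; omega
      · intro s hs hs'
        simp only [Finset.mem_Ioc] at hs hs'
        have hrm : (r:ℤ) * m ≤ M := hrmM m (by omega)
        rw [hzero_out m s (by omega) (Or.inl (by omega)), zero_mul]
    rw [ext]
    have : ∑ y ∈ Ioc (t:ℤ) hi, Cz p m y * Cz p m' (j - x - y)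
        = ∑ s ∈ Ioc (t:ℤ) hi, Cz p m s * Cz p m' (j - s - x) := by
      apply Finset.sum_congr rfl
      intro y _
      congr 1
      congr 1
      ring
    rw [this]
    show W m m' x + _ = _
    ring
  -- window positivity
  have window : ∀ x : ℤ, 0 ≤ x → 0 ≤ W k (l-1) x - W (l-1) k x := by
    intro x hx
    show (0:ℝ) ≤ (∑ y ∈ Ioc ((t:ℤ) - x) (t:ℤ), Cz p k y * Cz p (l-1) (j - x - y))
      - ∑ y ∈ Ioc ((t:ℤ) - x) (t:ℤ), Cz p (l-1) y * Cz p k (j - x - y)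
    rw [← Finset.sum_sub_distrib]
    set e : ℤ := j - x with he
    set g : ℤ → ℝ := fun y => Cz p k y * Cz p (l-1) (e - y) - Cz p (l-1) y * Cz p k (e - y)
      with hg
    have hgy : ∀ y : ℤ, Cz p k y * Cz p (l-1) (j - x - y) - Cz p (l-1) y * Cz p k (j - x - y)
        = g y := by
      intro y
      show _ = Cz p k y * Cz p (l-1) (e - y) - Cz p (l-1) y * Cz p k (e - y)
      rw [he]
    rw [Finset.sum_congr rfl (fun y _ => hgy y)]
    set c : ℤ := max ((t:ℤ) - x) (j - t - 1) with hc
    have hc1 : (t:ℤ) - x ≤ c := le_max_left _ _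
    have hc2 : c ≤ (t:ℤ) := by
      apply max_le
      · omega
      · omega
    rw [sum_Ioc_split g hc1 hc2]
    have part1 : ∑ y ∈ Ioc ((t:ℤ) - x) c, g y = 0 := by
      apply Finset.sum_involution (fun y _ => e - y)
      · intro y hy
        show g y + g (e - y) = 0
        have h1 : e - (e - y) = y := by ring
        show (Cz p k y * Cz p (l-1) (e - y) - Cz p (l-1) y * Cz p k (e - y))
          + (Cz p k (e - y) * Cz p (l-1) (e - (e - y)) - Cz p (l-1) (e - y) * Cz p k (e - (e - y))) = 0
        rw [h1]
        ring
      · intro y hy hgy0 heq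
        apply hgy0
        have hy2 : e - y = y := heq
        show Cz p k y * Cz p (l-1) (e - y) - Cz p (l-1) y * Cz p k (e - y) = 0
        rw [hy2]
        ring
      · intro y hy
        simp only [Finset.mem_Ioc] at hy ⊢
        rcases le_or_gt (j - t - 1) ((t:ℤ) - x) with hcc | hcc
        · exfalso; rw [hc] at hy; omega
        · rw [hc] at hy ⊢
          rw [max_eq_right (le_of_lt hcc)] at hy ⊢
          omega
      · intro y hy
        show e - (e - y) = y
        ring
    rw [part1, zero_add]
    apply Finset.sum_nonneg
    intro y hy
    simp only [Finset.mem_Ioc] at hy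
    have hy2 : e - y ≤ y := by
      have h1 : c < y := hy.1
      have h2 : (t:ℤ) - x ≤ c := hc1
      have h3 : j - t - 1 ≤ c := le_max_right _ _
      omega
    have := Cz_lr p hnn r hr0 hTN (show l - 1 ≤ k by omega) hy2
    show (0:ℝ) ≤ Cz p k y * Cz p (l-1) (e - y) - Cz p (l-1) y * Cz p k (e - y)
    linarith
  -- assemble
  have hIocIcc : Icc (j - (t:ℤ)) (t:ℤ) = Ioc (j - t - 1) (t:ℤ) := by
    ext s
    simp only [Finset.mem_Icc, Finset.mem_Ioc]
    omega
  have middle : ∀ m m' : ℕ, m + m' = k + l →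
      ∑ s ∈ Icc (j - (t:ℤ)) (t:ℤ), Cz p m s * Cz p m' (j - s)
        = Cz p (k+l) j - U m m' - U m' m := by
    intro m m' hmm
    have splitall : ∑ s ∈ Ioc lo hi, Cz p m s * Cz p m' (j - s)
        = ∑ s ∈ Ioc lo (j - t - 1), Cz p m s * Cz p m' (j - s)
          + ∑ s ∈ Ioc (j - t - 1) (t:ℤ), Cz p m s * Cz p m' (j - s)
          + ∑ s ∈ Ioc (t:ℤ) hi, Cz p m s * Cz p m' (j - s) := by
      rw [sum_Ioc_split _ (show lo ≤ (t:ℤ) by omega) hthi]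
      rw [sum_Ioc_split _ (show lo ≤ j - t - 1 by omega) hjt]
    have h1 := tot m m' (by omega)
    rw [splitall] at h1
    rw [refl_eq m m' (by omega) (by omega)] at h1
    rw [hIocIcc]
    have : U m m' = ∑ s ∈ Ioc (t:ℤ) hi, Cz p m s * Cz p m' (j - s) := rfl
    rw [hmm] at h1
    linarith [h1]
  have hmid1 := middle (k+1) (l-1) (by omega)
  have hmid2 := middle k l (by omega)
  rw [hmid1, hmid2]
  have hstep1 : U (k+1) (l-1) = U k ((l-1)+1) + ∑ x ∈ Icc (0:ℤ) (r:ℤ), Cz p 1 x * W k (l-1) x :=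
    Ustep k (l-1) (by omega) (by omega)
  have hstep2 : U ((l-1)+1) k = U (l-1) (k+1) + ∑ x ∈ Icc (0:ℤ) (r:ℤ), Cz p 1 x * W (l-1) k x :=
    Ustep (l-1) k (by omega) (by omega)
  have hl1 : (l-1)+1 = l := by omega
  rw [hl1] at hstep1 hstep2
  have hVle : ∑ x ∈ Icc (0:ℤ) (r:ℤ), Cz p 1 x * W (l-1) k x
      ≤ ∑ x ∈ Icc (0:ℤ) (r:ℤ), Cz p 1 x * W k (l-1) x := by
    apply Finset.sum_le_sum
    intro x hx
    simp only [Finset.mem_Icc] at hx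
    have := window x hx.1
    have hnn1 : 0 ≤ Cz p 1 x := Cz_nonneg p hnn 1 x
    nlinarith [this, hnn1]
  linarith [hstep1, hstep2, hVle]

lemma bridge (p : ℕ → ℝ) (a b t j : ℕ) :
    ∑ u ∈ range (j+1),
        (if u < t+1 then cf p a u else 0) * (if j - u < t+1 then cf p b (j-u) else 0)
      = ∑ s ∈ Icc ((j:ℤ) - t) (t:ℤ), Cz p a s * Cz p b (j - s) := by
  set G : ℤ → ℝ := fun s =>
    (if s ≤ (t:ℤ) then Cz p a s else 0) * (if (j:ℤ) - s ≤ (t:ℤ) then Cz p b ((j:ℤ) - s) else 0)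
    with hG
  have hGzero : ∀ s : ℤ, (s < 0 ∨ (j:ℤ) < s ∨ (t:ℤ) < s ∨ s < (j:ℤ) - t) → G s = 0 := by
    intro s hs
    show (if s ≤ (t:ℤ) then Cz p a s else 0) * (if (j:ℤ) - s ≤ (t:ℤ) then Cz p b ((j:ℤ) - s) else 0) = 0
    rcases hs with h | h | h | h
    · rw [show Cz p a s = 0 from Cz_neg p a h]
      split_ifs <;> simp
    · rw [show Cz p b ((j:ℤ) - s) = 0 from Cz_neg p b (by omega)]
      split_ifs <;> simp
    · rw [if_neg (by omega), zero_mul]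
    · rw [if_neg (show ¬((j:ℤ) - s ≤ (t:ℤ)) by omega), mul_zero]
  have step1 : ∑ u ∈ range (j+1),
      (if u < t+1 then cf p a u else 0) * (if j - u < t+1 then cf p b (j-u) else 0)
      = ∑ s ∈ Icc (0:ℤ) (j:ℤ), G s := by
    rw [sum_Icc_int_eq G j]
    apply Finset.sum_congr rfl
    intro u hu
    simp only [Finset.mem_range] at hu
    have huj : u ≤ j := by omega
    show _ = (if (u:ℤ) ≤ (t:ℤ) then Cz p a u else 0) *
      (if (j:ℤ) - u ≤ (t:ℤ) then Cz p b ((j:ℤ) - u) else 0)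
    have he : Cz p b ((j:ℤ) - u) = cf p b (j - u) := by
      rw [show ((j:ℤ) - u) = ((j - u : ℕ) : ℤ) by omega, Cz_coe]
    by_cases h1 : u < t + 1
    · rw [if_pos h1, if_pos (show (u:ℤ) ≤ (t:ℤ) by omega)]
      by_cases h2 : j - u < t + 1
      · rw [if_pos h2, if_pos (show (j:ℤ) - u ≤ (t:ℤ) by omega), Cz_coe, he]
      · rw [if_neg h2, if_neg (show ¬((j:ℤ) - u ≤ (t:ℤ)) by omega), mul_zero, mul_zero]
    · rw [if_neg h1, if_neg (show ¬((u:ℤ) ≤ (t:ℤ)) by omega), zero_mul, zero_mul]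
  set L : ℤ := min 0 ((j:ℤ) - t) with hL
  set R : ℤ := max (j:ℤ) (t:ℤ) with hR
  have ext1 : ∑ s ∈ Icc (0:ℤ) (j:ℤ), G s = ∑ s ∈ Icc L R, G s := by
    apply Finset.sum_subset
    · apply Finset.Icc_subset_Icc
      · omega
      · omega
    · intro s hs hs'
      simp only [Finset.mem_Icc] at hs hs'
      apply hGzero
      omega
  have ext2 : ∑ s ∈ Icc ((j:ℤ) - t) (t:ℤ), G s = ∑ s ∈ Icc L R, G s := by
    apply Finset.sum_subset
    · apply Finset.Icc_subset_Icc
      · omega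
      · omega
    · intro s hs hs'
      simp only [Finset.mem_Icc] at hs hs'
      apply hGzero
      omega
  have cong : ∑ s ∈ Icc ((j:ℤ) - t) (t:ℤ), G s
      = ∑ s ∈ Icc ((j:ℤ) - t) (t:ℤ), Cz p a s * Cz p b ((j:ℤ) - s) := by
    apply Finset.sum_congr rfl
    intro s hs
    simp only [Finset.mem_Icc] at hs
    show (if s ≤ (t:ℤ) then Cz p a s else 0) * (if (j:ℤ) - s ≤ (t:ℤ) then Cz p b ((j:ℤ) - s) else 0) = _
    rw [if_pos hs.2, if_pos (by omega)]
  rw [step1, ext1, ← ext2, cong]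

/-- The key inequality at the level of truncated power series products. -/
lemma key_poly (p : ℕ → ℝ) (hnn : ∀ n, 0 ≤ p n) (r : ℕ) (hr0 : ∀ w, r < w → p w = 0)
    (hTN : IsTN 2 (toeplitz p)) (k l : ℕ) (hl : 1 ≤ l) (hkl : l ≤ k) (t j : ℕ) :
    ((PowerSeries.trunc (t+1) ((PowerSeries.mk p)^(k+1))) *
      (PowerSeries.trunc (t+1) ((PowerSeries.mk p)^(l-1)))).coeff j
    ≤ ((PowerSeries.trunc (t+1) ((PowerSeries.mk p)^k)) *
      (PowerSeries.trunc (t+1) ((PowerSeries.mk p)^l))).coeff j := by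
  have expand : ∀ a b : ℕ,
      ((PowerSeries.trunc (t+1) ((PowerSeries.mk p)^a)) *
        (PowerSeries.trunc (t+1) ((PowerSeries.mk p)^b))).coeff j
      = ∑ s ∈ Icc ((j:ℤ) - t) (t:ℤ), Cz p a s * Cz p b ((j:ℤ) - s) := by
    intro a b
    rw [Polynomial.coeff_mul]
    rw [Finset.Nat.sum_antidiagonal_eq_sum_range_succ_mk]
    rw [← bridge p a b t j]
    apply Finset.sum_congr rfl
    intro u _
    rw [PowerSeries.coeff_trunc, PowerSeries.coeff_trunc]
    rfl
  rw [expand, expand]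
  exact key_sum p hnn r hr0 hTN k l hl hkl t j

/-! ### Polynomial coefficient machinery -/

lemma poly_one_coeff_nonneg (j : ℕ) : (0:ℝ) ≤ (1 : Polynomial ℝ).coeff j := by
  rw [Polynomial.coeff_one]
  split_ifs <;> norm_num

lemma prod_coeff_nonneg {ι : Type*} (F : Finset ι) (f : ι → Polynomial ℝ)
    (h : ∀ i ∈ F, ∀ j, 0 ≤ (f i).coeff j) : ∀ j, 0 ≤ (∏ i ∈ F, f i).coeff j := by
  induction F using Finset.cons_induction with
  | empty => intro j; rw [Finset.prod_empty]; exact poly_one_coeff_nonneg j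
  | cons a s ha ih =>
      intro j
      rw [Finset.prod_cons, Polynomial.coeff_mul]
      apply Finset.sum_nonneg
      intro x _
      exact mul_nonneg (h a (Finset.mem_cons_self a s) x.1)
        (ih (fun i hi => h i (Finset.mem_cons_of_mem hi)) x.2)

lemma coeff_mul_le (Rp P Q : Polynomial ℝ) (hR : ∀ j, 0 ≤ Rp.coeff j)
    (h : ∀ j, P.coeff j ≤ Q.coeff j) : ∀ j, (Rp * P).coeff j ≤ (Rp * Q).coeff j := by
  intro j
  rw [Polynomial.coeff_mul, Polynomial.coeff_mul]
  apply Finset.sum_le_sum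
  intro x _
  exact mul_le_mul_of_nonneg_left (h x.2) (hR x.1)

lemma coeff_prod_at_degrees {ι : Type*} (F : Finset ι) (f : ι → Polynomial ℝ) (d : ι → ℕ)
    (hdeg : ∀ i ∈ F, (f i).natDegree ≤ d i) :
    (∏ i ∈ F, f i).coeff (∑ i ∈ F, d i) = ∏ i ∈ F, (f i).coeff (d i) := by
  induction F using Finset.cons_induction with
  | empty => simp
  | cons a s ha ih =>
      rw [Finset.prod_cons, Finset.sum_cons, Finset.prod_cons,
        ← ih (fun i hi => hdeg i (Finset.mem_cons_of_mem hi))]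
      rw [Polynomial.coeff_mul]
      apply Finset.sum_eq_single (a := (d a, ∑ i ∈ s, d i))
      · intro b hb hbne
        simp only [Finset.HasAntidiagonal.mem_antidiagonal] at hb
        rcases lt_or_ge (d a) b.1 with h1 | h1
        · rw [Polynomial.coeff_eq_zero_of_natDegree_lt
            (lt_of_le_of_lt (hdeg a (Finset.mem_cons_self a s)) h1), zero_mul]
        · have h2 : (∑ i ∈ s, d i) < b.2 := by
            rcases lt_or_eq_of_le h1 with h | h
            · omega
            · exfalso; apply hbne; have : b.2 = ∑ i ∈ s, d i := by omega
              exact Prod.ext h this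
          rw [Polynomial.coeff_eq_zero_of_natDegree_lt
            (lt_of_le_of_lt (le_trans (Polynomial.natDegree_prod_le s f)
              (Finset.sum_le_sum fun i hi => hdeg i (Finset.mem_cons_of_mem hi))) h2), mul_zero]
      · intro hno
        exfalso
        apply hno
        simp [Finset.HasAntidiagonal.mem_antidiagonal]

lemma natDegree_prod_le_sum {ι : Type*} (F : Finset ι) (f : ι → Polynomial ℝ) (d : ι → ℕ)
    (hdeg : ∀ i ∈ F, (f i).natDegree ≤ d i) :
    (∏ i ∈ F, f i).natDegree ≤ ∑ i ∈ F, d i :=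
  le_trans (Polynomial.natDegree_prod_le F f) (Finset.sum_le_sum hdeg)

/-! ### facts about truncations of powers -/

lemma trunc_coeff (p : ℕ → ℝ) (m t w : ℕ) :
    (PowerSeries.trunc (t+1) ((PowerSeries.mk p)^m)).coeff w
      = if w ≤ t then cf p m w else 0 := by
  rw [PowerSeries.coeff_trunc]
  by_cases h : w ≤ t
  · rw [if_pos (by omega : w < t + 1), if_pos h]
    rfl
  · rw [if_neg (by omega : ¬ w < t + 1), if_neg h]

lemma trunc_coeff_nonneg (p : ℕ → ℝ) (hnn : ∀ n, 0 ≤ p n) (m t w : ℕ) :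
    0 ≤ (PowerSeries.trunc (t+1) ((PowerSeries.mk p)^m)).coeff w := by
  rw [trunc_coeff]
  split_ifs
  · exact cf_nonneg p hnn m w
  · exact le_rfl

lemma trunc_natDegree_le (p : ℕ → ℝ) (r : ℕ) (hr0 : ∀ w, r < w → p w = 0) (m t D : ℕ)
    (hD1 : r * m ≤ D ∨ t ≤ D) :
    (PowerSeries.trunc (t+1) ((PowerSeries.mk p)^m)).natDegree ≤ D := by
  rw [Polynomial.natDegree_le_iff_coeff_eq_zero]
  intro w hw
  rw [trunc_coeff]
  rcases hD1 with h | h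
  · split_ifs with h2
    · exact cf_eq_zero p r hr0 m w (by omega)
    · rfl
  · rw [if_neg (by omega)]

/-! ### partial sums of partitions -/

def pSum (nu : PartitionSeq) (j : ℕ) : ℕ := ∑ i ∈ Icc 1 j, nu.part i

lemma sum_Icc_split_nat {M : Type*} [AddCommMonoid M] (f : ℕ → M) (j n : ℕ) (h : j ≤ n) :
    ∑ i ∈ Icc 1 n, f i = ∑ i ∈ Icc 1 j, f i + ∑ i ∈ Icc (j+1) n, f i := by
  have h1 : ∀ x : ℕ, Icc 1 x = Ioc 0 x := fun x => Finset.Icc_add_one_left_eq_Ioc 0 x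
  have h2 : Icc (j+1) n = Ioc j n := Finset.Icc_add_one_left_eq_Ioc j n
  rw [h1, h1, h2]
  exact (Finset.sum_Ioc_consecutive f (Nat.zero_le j) h).symm

lemma pSum_succ (nu : PartitionSeq) (j : ℕ) : pSum nu (j+1) = pSum nu j + nu.part (j+1) :=
  Finset.sum_Icc_succ_top (by omega) _

lemma pSum_zero (nu : PartitionSeq) : pSum nu 0 = 0 := by
  unfold pSum
  rw [show Icc 1 0 = ∅ from rfl]
  rfl

lemma exists_bound (nu : PartitionSeq) : ∃ K₀, ∀ i, nu.part i ≠ 0 → i ≤ K₀ := by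
  obtain ⟨K₀, hK₀⟩ := nu.finSupp.bddAbove
  exact ⟨K₀, fun i h => hK₀ (by exact h)⟩

lemma weight_eq_sum (nu : PartitionSeq) (K : ℕ) (hK : ∀ i, nu.part i ≠ 0 → i ≤ K) :
    nu.weight = ∑ i ∈ Icc 1 K, nu.part i := by
  apply finsum_eq_sum_of_support_subset
  intro i hi
  simp only [Function.mem_support] at hi
  simp only [Finset.coe_Icc, Set.mem_Icc]
  constructor
  · by_contra h
    have : i = 0 := by omega
    rw [this, nu.zero] at hi
    exact hi rfl
  · exact hK i hi

lemma pSum_le_weight (nu : PartitionSeq) (j : ℕ) : pSum nu j ≤ nu.weight := by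
  obtain ⟨K₀, hK₀⟩ := exists_bound nu
  set K := max j K₀ with hKdef
  rw [weight_eq_sum nu K (fun i h => le_trans (hK₀ i h) (le_max_right _ _))]
  apply Finset.sum_le_sum_of_subset
  apply Finset.Icc_subset_Icc_right
  exact le_max_left _ _

lemma index_le_weight (nu : PartitionSeq) (i : ℕ) (hi : 1 ≤ i) (h : nu.part i ≠ 0) :
    i ≤ nu.weight := by
  have h1 : ∀ x ∈ Icc 1 i, 1 ≤ nu.part x := by
    intro x hx
    simp only [Finset.mem_Icc] at hx
    have := nu.antitone hx.1 hx.2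
    omega
  calc i = ∑ _x ∈ Icc 1 i, 1 := by rw [Finset.sum_const, Nat.card_Icc, smul_eq_mul]; omega
    _ ≤ ∑ x ∈ Icc 1 i, nu.part x := Finset.sum_le_sum h1
    _ ≤ nu.weight := pSum_le_weight nu i

lemma support_le_n (nu : PartitionSeq) {n : ℕ} (hw : nu.weight = n) :
    ∀ i, nu.part i ≠ 0 → 1 ≤ i ∧ i ≤ n := by
  intro i h
  have h1 : 1 ≤ i := by
    by_contra hc
    have : i = 0 := by omega
    rw [this, nu.zero] at h; exact h rfl
  exact ⟨h1, hw ▸ index_le_weight nu i h1 h⟩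

lemma pSum_n (nu : PartitionSeq) {n : ℕ} (hw : nu.weight = n) (j : ℕ) (hj : n ≤ j) :
    pSum nu j = n := by
  rw [← hw, weight_eq_sum nu j (fun i h => le_trans (support_le_n nu hw i h).2 hj)]
  rfl

lemma fPoly_eq_prod (p : ℕ → ℝ) (t : ℕ) (nu : PartitionSeq) {n : ℕ} (hw : nu.weight = n) :
    fPoly nu p t = ∏ i ∈ Icc 1 n, PowerSeries.trunc (t + 1) (PowerSeries.mk p ^ nu.part i) := by
  apply finprod_eq_prod_of_mulSupport_subset
  intro i hi
  simp only [Function.mem_mulSupport] at hi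
  simp only [Finset.coe_Icc, Set.mem_Icc]
  apply support_le_n nu hw
  intro hzero
  apply hi
  rw [hzero, pow_zero, PowerSeries.trunc_one]

lemma antitone_of_adjacent (f : ℕ → ℕ) (h : ∀ i, 1 ≤ i → f (i+1) ≤ f i) :
    ∀ ⦃i j : ℕ⦄, 1 ≤ i → i ≤ j → f j ≤ f i := by
  intro i j hi hij
  induction j, hij using Nat.le_induction with
  | base => exact le_rfl
  | succ k hk ih => exact le_trans (h k (by omega)) ih

lemma exists_step (lam mu : PartitionSeq) (n : ℕ) (hwl : lam.weight = n) (hwm : mu.weight = n)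
    (hdom : ∀ j, pSum mu j ≤ pSum lam j)
    (hne : ∃ i, pSum mu i < pSum lam i) :
    ∃ (mu' : PartitionSeq) (a c : ℕ),
      1 ≤ a ∧ a < c ∧ c ≤ n ∧
      mu'.part a = mu.part a + 1 ∧ mu'.part c = mu.part c - 1 ∧
      1 ≤ mu.part c ∧ mu.part c ≤ mu.part a ∧
      (∀ i, i ≠ a → i ≠ c → mu'.part i = mu.part i) ∧
      mu'.weight = n ∧
      (∀ j, pSum mu' j ≤ pSum lam j) ∧
      (∀ i ∈ Icc 1 n, pSum lam i - pSum mu' i ≤ pSum lam i - pSum mu i) ∧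
      pSum lam a - pSum mu' a < pSum lam a - pSum mu a := by
  -- the partitions differ somewhere
  have hQ : ∃ i, mu.part i ≠ lam.part i := by
    by_contra hc
    push_neg at hc
    obtain ⟨i, hi⟩ := hne
    have : pSum mu i = pSum lam i := Finset.sum_congr rfl (fun x _ => hc x)
    omega
  classical
  set a := Nat.find hQ with ha
  have haQ : mu.part a ≠ lam.part a := Nat.find_spec hQ
  have ha_min : ∀ i, i < a → mu.part i = lam.part i := by
    intro i hi
    by_contra hc
    have : a ≤ i := Nat.find_le hc
    omega
  have ha1 : 1 ≤ a := by
    rcases Nat.eq_zero_or_pos a with h | h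
    · exfalso; apply haQ; rw [h, mu.zero, lam.zero]
    · exact h
  have hpsum_lt : ∀ i, i < a → pSum mu i = pSum lam i := by
    intro i hi
    apply Finset.sum_congr rfl
    intro x hx
    simp only [Finset.mem_Icc] at hx
    exact ha_min x (by omega)
  have hpa : pSum mu a = pSum mu (a-1) + mu.part a := by
    have := pSum_succ mu (a-1)
    rw [show a - 1 + 1 = a by omega] at this
    exact this
  have hpa' : pSum lam a = pSum lam (a-1) + lam.part a := by
    have := pSum_succ lam (a-1)
    rw [show a - 1 + 1 = a by omega] at this
    exact this
  have hmua : mu.part a < lam.part a := by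
    have h1 := hpsum_lt (a-1) (by omega)
    have h2 := hdom a
    omega
  have han : a ≤ n := by
    have := support_le_n lam hwl a (by omega)
    exact this.2
  have hpn : pSum mu n = pSum lam n := by
    rw [pSum_n mu hwm n le_rfl, pSum_n lam hwl n le_rfl]
  have haltn : a < n := by
    rcases lt_or_eq_of_le han with h | h
    · exact h
    · exfalso
      have h1 := hpsum_lt (a-1) (by omega)
      have h2 : pSum mu a = pSum lam a := by rw [h]; exact hpn
      omega
  -- find the first re-equalization point
  have hR : ∃ i, a < i ∧ pSum mu i = pSum lam i := ⟨n, haltn, hpn⟩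
  set c := Nat.find hR with hc
  obtain ⟨hac, hpc⟩ : a < c ∧ pSum mu c = pSum lam c := Nat.find_spec hR
  have hcn : c ≤ n := Nat.find_le ⟨haltn, hpn⟩
  have hstrict : ∀ i, a ≤ i → i < c → pSum mu i < pSum lam i := by
    intro i hai hic
    rcases eq_or_lt_of_le hai with heq | hlt
    · have h1 := hpsum_lt (a-1) (by omega)
      rw [← heq]
      omega
    · have h2 := hdom i
      rcases lt_or_eq_of_le h2 with h | h
      · exact h
      · exfalso
        have : c ≤ i := Nat.find_le ⟨hlt, h⟩
        omega
  have hpcm : pSum mu c = pSum mu (c-1) + mu.part c := by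
    have := pSum_succ mu (c-1)
    rw [show c - 1 + 1 = c by omega] at this
    exact this
  have hpcl : pSum lam c = pSum lam (c-1) + lam.part c := by
    have := pSum_succ lam (c-1)
    rw [show c - 1 + 1 = c by omega] at this
    exact this
  have hvgt : lam.part c < mu.part c := by
    have h1 := hstrict (c-1) (by omega) (by omega)
    omega
  have hv1 : 1 ≤ mu.part c := by omega
  have hvka : mu.part c ≤ mu.part a := mu.antitone ha1 (le_of_lt hac)
  -- next row of mu is strictly smaller than v
  have hnext : mu.part (c+1) < mu.part c := by
    rcases lt_or_eq_of_le (mu.antitone (by omega : 1 ≤ c) (by omega : c ≤ c+1)) with h | h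
    · exact h
    · exfalso
      have h1 : pSum mu (c+1) = pSum mu c + mu.part (c+1) := pSum_succ mu c
      have h2 : pSum lam (c+1) = pSum lam c + lam.part (c+1) := pSum_succ lam c
      have h3 : lam.part (c+1) ≤ lam.part c := lam.antitone (by omega) (by omega)
      have h4 := hdom (c+1)
      omega
  -- define the new partition
  set part' : ℕ → ℕ :=
    fun i => if i = a then mu.part a + 1 else if i = c then mu.part c - 1 else mu.part i
    with hpart'
  have hpa'' : part' a = mu.part a + 1 := by
    show (if a = a then mu.part a + 1 else if a = c then mu.part c - 1 else mu.part a)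
      = mu.part a + 1
    rw [if_pos rfl]
  have hpc'' : part' c = mu.part c - 1 := by
    show (if c = a then mu.part a + 1 else if c = c then mu.part c - 1 else mu.part c)
      = mu.part c - 1
    rw [if_neg (by omega), if_pos rfl]
  have hpother : ∀ i, i ≠ a → i ≠ c → part' i = mu.part i := by
    intro i h1 h2
    show (if i = a then mu.part a + 1 else if i = c then mu.part c - 1 else mu.part i)
      = mu.part i
    rw [if_neg h1, if_neg h2]
  have hadj : ∀ i, 1 ≤ i → part' (i+1) ≤ part' i := by
    intro i hi
    rcases eq_or_ne (i+1) a with h1 | h1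
    · rw [h1, hpa'', hpother i (by omega) (by omega)]
      rw [ha_min i (by omega)]
      have := lam.antitone (show 1 ≤ i by omega) (show i ≤ i + 1 by omega)
      rw [h1] at this
      omega
    · rcases eq_or_ne i a with h2 | h2
      · rw [h2, hpa'']
        rcases eq_or_ne (a+1) c with h3 | h3
        · rw [h3, hpc'']
          have : mu.part c ≤ mu.part a := hvka
          omega
        · rw [hpother (a+1) (by omega) h3]
          have := mu.antitone (show 1 ≤ a by omega) (show a ≤ a + 1 by omega)
          omega
      · rcases eq_or_ne (i+1) c with h3 | h3
        · rw [h3, hpc'', hpother i h2 (by omega)]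
          have : mu.part c ≤ mu.part i := mu.antitone hi (by omega)
          omega
        · rcases eq_or_ne i c with h4 | h4
          · rw [h4, hpc'', hpother (c+1) (by omega) (by omega)]
            have := hnext
            omega
          · rw [hpother (i+1) h1 h3, hpother i h2 h4]
            exact mu.antitone hi (by omega)
  set mu' : PartitionSeq := {
    part := part'
    zero := by
      rw [hpother 0 (by omega) (by omega)]
      exact mu.zero
    antitone := antitone_of_adjacent part' hadj
    finSupp := by
      apply Set.Finite.subset (Set.finite_Icc 1 n)
      intro i hi
      simp only [Function.mem_support] at hi
      simp only [Set.mem_Icc]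
      rcases eq_or_ne i a with rfl | h1
      · exact ⟨ha1, by omega⟩
      · rcases eq_or_ne i c with rfl | h2
        · exact ⟨by omega, hcn⟩
        · rw [hpother i h1 h2] at hi
          exact support_le_n mu hwm i hi
  } with hmu'
  have hmupart : mu'.part = part' := rfl
  -- partial sums of mu'
  have hps' : ∀ j, pSum mu' j = pSum mu j + (if a ≤ j ∧ j < c then 1 else 0) := by
    intro j
    rcases lt_or_ge j a with h1 | h1
    · rw [if_neg (by omega), add_zero]
      apply Finset.sum_congr rfl
      intro x hx
      simp only [Finset.mem_Icc] at hx
      rw [hmupart, hpother x (by omega) (by omega)]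
    · rcases lt_or_ge j c with h2 | h2
      · rw [if_pos ⟨h1, h2⟩]
        unfold pSum
        have hmem : a ∈ Icc 1 j := by simp only [Finset.mem_Icc]; omega
        rw [← Finset.add_sum_erase _ _ hmem, ← Finset.add_sum_erase _ _ hmem]
        rw [hmupart, hpa'']
        have : ∑ x ∈ (Icc 1 j).erase a, part' x = ∑ x ∈ (Icc 1 j).erase a, mu.part x := by
          apply Finset.sum_congr rfl
          intro x hx
          simp only [Finset.mem_erase, Finset.mem_Icc] at hx
          exact hpother x hx.1 (by omega)
        rw [this]
        omega
      · rw [if_neg (by omega), add_zero]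
        unfold pSum
        have hmema : a ∈ Icc 1 j := by simp only [Finset.mem_Icc]; omega
        have hmemc : c ∈ (Icc 1 j).erase a := by
          simp only [Finset.mem_erase, Finset.mem_Icc]; omega
        rw [← Finset.add_sum_erase _ _ hmema, ← Finset.add_sum_erase _ _ hmema,
          ← Finset.add_sum_erase _ _ hmemc, ← Finset.add_sum_erase _ _ hmemc]
        rw [hmupart, hpa'', hpc'']
        have : ∑ x ∈ ((Icc 1 j).erase a).erase c, part' x
            = ∑ x ∈ ((Icc 1 j).erase a).erase c, mu.part x := by
          apply Finset.sum_congr rfl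
          intro x hx
          simp only [Finset.mem_erase, Finset.mem_Icc] at hx
          exact hpother x hx.2.1 hx.1
        rw [this]
        omega
  have hw' : mu'.weight = n := by
    have hb : ∀ i, mu'.part i ≠ 0 → i ≤ n := by
      intro i h
      rcases eq_or_ne i a with rfl | h1
      · omega
      · rcases eq_or_ne i c with rfl | h2
        · exact hcn
        · rw [hmupart, hpother i h1 h2] at h
          exact (support_le_n mu hwm i h).2
    rw [weight_eq_sum mu' n hb]
    have h2 := hps' n
    rw [if_neg (show ¬(a ≤ n ∧ n < c) by omega), add_zero] at h2
    have h3 : mu.weight = ∑ i ∈ Icc 1 n, mu.part i :=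
      weight_eq_sum mu n (fun i h => (support_le_n mu hwm i h).2)
    unfold pSum at h2
    omega
  refine ⟨mu', a, c, ha1, hac, hcn, hpa'', hpc'', hv1, hvka, hpother, hw', ?_, ?_, ?_⟩
  · intro j
    rw [hps' j]
    split_ifs with h
    · have := hstrict j h.1 h.2
      omega
    · have := hdom j
      omega
  · intro i _
    rw [hps' i]
    split_ifs <;> omega
  · rw [hps' a, if_pos ⟨le_rfl, hac⟩]
    have := hstrict a le_rfl hac
    omega

lemma step_fPoly (p : ℕ → ℝ) (hnn : ∀ n, 0 ≤ p n) (r : ℕ) (hr0 : ∀ w, r < w → p w = 0)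
    (hTN : IsTN 2 (toeplitz p)) (n : ℕ) (mu' mu : PartitionSeq) (a c : ℕ)
    (hw' : mu'.weight = n) (hwm : mu.weight = n)
    (ha1 : 1 ≤ a) (hac : a < c) (hcn : c ≤ n)
    (h1 : mu'.part a = mu.part a + 1) (h2 : mu'.part c = mu.part c - 1)
    (hv1 : 1 ≤ mu.part c) (hvka : mu.part c ≤ mu.part a)
    (hoth : ∀ i, i ≠ a → i ≠ c → mu'.part i = mu.part i) :
    ∀ j t : ℕ, (fPoly mu' p t).coeff j ≤ (fPoly mu p t).coeff j := by
  intro j t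
  rw [fPoly_eq_prod p t mu' hw', fPoly_eq_prod p t mu hwm]
  set q : ℕ → Polynomial ℝ :=
    fun m => PowerSeries.trunc (t + 1) ((PowerSeries.mk p) ^ m) with hq
  have hmemA : a ∈ Icc 1 n := by simp only [Finset.mem_Icc]; omega
  have hmemC : c ∈ (Icc 1 n).erase a := by
    simp only [Finset.mem_erase, Finset.mem_Icc]; omega
  rw [← Finset.mul_prod_erase (Icc 1 n) (fun i => q (mu'.part i)) hmemA,
    ← Finset.mul_prod_erase _ (fun i => q (mu'.part i)) hmemC,
    ← Finset.mul_prod_erase (Icc 1 n) (fun i => q (mu.part i)) hmemA,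
    ← Finset.mul_prod_erase _ (fun i => q (mu.part i)) hmemC]
  have hrest : ∏ i ∈ ((Icc 1 n).erase a).erase c, q (mu'.part i)
      = ∏ i ∈ ((Icc 1 n).erase a).erase c, q (mu.part i) := by
    apply Finset.prod_congr rfl
    intro i hi
    simp only [Finset.mem_erase, Finset.mem_Icc] at hi
    rw [hoth i hi.2.1 hi.1]
  rw [hrest, h1, h2]
  set R : Polynomial ℝ := ∏ i ∈ ((Icc 1 n).erase a).erase c, q (mu.part i) with hR
  have e1 : q (mu.part a + 1) * (q (mu.part c - 1) * R)
      = R * (q (mu.part a + 1) * q (mu.part c - 1)) := by ring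
  have e2 : q (mu.part a) * (q (mu.part c) * R) = R * (q (mu.part a) * q (mu.part c)) := by
    ring
  rw [e1, e2]
  apply coeff_mul_le
  · apply prod_coeff_nonneg
    intro i _ w
    exact trunc_coeff_nonneg p hnn _ t w
  · intro w
    exact key_poly p hnn r hr0 hTN (mu.part a) (mu.part c) hv1 hvka t w

lemma forward (p : ℕ → ℝ) (hnn : ∀ n, 0 ≤ p n) (r : ℕ) (hr0 : ∀ w, r < w → p w = 0)
    (hTN : IsTN 2 (toeplitz p)) (n : ℕ) (lam : PartitionSeq) (hwl : lam.weight = n) :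
    ∀ mu : PartitionSeq, mu.weight = n → (∀ j, pSum mu j ≤ pSum lam j) → CondC p lam mu := by
  suffices H : ∀ d : ℕ, ∀ mu : PartitionSeq, mu.weight = n →
      (∀ j, pSum mu j ≤ pSum lam j) →
      (∑ i ∈ Icc 1 n, (pSum lam i - pSum mu i)) = d → CondC p lam mu by
    intro mu hwm hdom
    exact H _ mu hwm hdom rfl
  intro d
  induction d using Nat.strong_induction_on with
  | _ d ih =>
    intro mu hwm hdom hd
    by_cases h0 : ∀ i, pSum mu i = pSum lam i
    · have hparts : ∀ i, lam.part i = mu.part i := by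
        intro i
        match i with
        | 0 => rw [lam.zero, mu.zero]
        | Nat.succ i' =>
            show lam.part (i' + 1) = mu.part (i' + 1)
            have e1 := pSum_succ mu i'
            have e2 := pSum_succ lam i'
            have e3 := h0 i'
            have e4 := h0 (i' + 1)
            omega
      intro jj tt
      unfold probE
      have : fPoly lam p tt = fPoly mu p tt := by
        unfold fPoly
        exact finprod_congr (fun i => by rw [hparts i])
      rw [this]
    · push_neg at h0
      obtain ⟨i0, hi0⟩ := h0
      have hi0' : pSum mu i0 < pSum lam i0 := lt_of_le_of_ne (hdom i0) hi0
      obtain ⟨mu', a, c, ha1, hac, hcn, hp1, hp2, hv1, hvka, hoth, hw', hdom', hdev_le,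
        hdev_lt⟩ := exists_step lam mu n hwl hwm hdom ⟨i0, hi0'⟩
      have hdlt : (∑ i ∈ Icc 1 n, (pSum lam i - pSum mu' i)) < d := by
        rw [← hd]
        apply Finset.sum_lt_sum hdev_le
        exact ⟨a, by simp only [Finset.mem_Icc]; omega, hdev_lt⟩
      have hC1 : CondC p lam mu' := ih _ hdlt mu' hw' hdom' rfl
      have hC2 := step_fPoly p hnn r hr0 hTN n mu' mu a c hw' hwm ha1 hac hcn hp1 hp2
        hv1 hvka hoth
      intro jj tt
      exact le_trans (hC1 jj tt) (hC2 jj tt)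

lemma reverse (p : ℕ → ℝ) (hnn : ∀ n, 0 ≤ p n) (r : ℕ) (hr : 1 ≤ r)
    (hr0 : ∀ w, r < w → p w = 0) (hpos : ∀ w, w ≤ r → 0 < p w)
    (n : ℕ) (lam mu : PartitionSeq) (hwl : lam.weight = n) (hwm : mu.weight = n)
    (hC : CondC p lam mu) : ∀ j, pSum mu j ≤ pSum lam j := by
  intro j
  rcases Nat.eq_zero_or_pos j with rfl | hj
  · rw [pSum_zero, pSum_zero]
  set m := lam.part j with hm
  rcases Nat.eq_zero_or_pos m with h0 | h1
  · have hsup : ∀ i, lam.part i ≠ 0 → i ≤ j := by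
      intro i h
      by_contra hcc
      push_neg at hcc
      have := lam.antitone hj (le_of_lt hcc)
      omega
    have hSn : pSum lam j = n := by
      rw [← hwl, weight_eq_sum lam j hsup]
      rfl
    rw [hSn, ← hwm]
    exact pSum_le_weight mu j
  · have hjn : j ≤ n := by
      have := index_le_weight lam j hj (by omega)
      omega
    set t := r * m with ht
    set SL := ∑ i ∈ Icc 1 n, min (lam.part i) m with hSL
    set SM := ∑ i ∈ Icc 1 n, min (mu.part i) m with hSM
    have hdegL : ∀ i ∈ Icc 1 n,
        (PowerSeries.trunc (t + 1) (PowerSeries.mk p ^ lam.part i)).natDegree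
          ≤ r * min (lam.part i) m := by
      intro i _
      apply trunc_natDegree_le p r hr0
      rcases le_total (lam.part i) m with h | h
      · left
        rw [min_eq_left h]
      · right
        rw [min_eq_right h, ht]
    have hdegM : ∀ i ∈ Icc 1 n,
        (PowerSeries.trunc (t + 1) (PowerSeries.mk p ^ mu.part i)).natDegree
          ≤ r * min (mu.part i) m := by
      intro i _
      apply trunc_natDegree_le p r hr0
      rcases le_total (mu.part i) m with h | h
      · left
        rw [min_eq_left h]
      · right
        rw [min_eq_right h, ht]
    have claim1 : SL ≤ SM := by
      by_contra hcon
      push_neg at hcon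
      set J := r * SL with hJ
      have hposJ : 0 < probE p lam J t := by
        unfold probE
        rw [fPoly_eq_prod p t lam hwl]
        have hJsum : J = ∑ i ∈ Icc 1 n, r * min (lam.part i) m := by
          rw [hJ, hSL, Finset.mul_sum]
        rw [hJsum, coeff_prod_at_degrees _ _ _ hdegL]
        apply Finset.prod_pos
        intro i _
        rw [trunc_coeff, if_pos (by
          rw [ht]
          exact Nat.mul_le_mul_left r (min_le_right _ _))]
        exact cf_pos p hnn r hpos (lam.part i) _
          (Nat.mul_le_mul_left r (min_le_left _ _))
      have hzeroJ : probE p mu J t = 0 := by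
        unfold probE
        rw [fPoly_eq_prod p t mu hwm]
        apply Polynomial.coeff_eq_zero_of_natDegree_lt
        apply lt_of_le_of_lt (natDegree_prod_le_sum _ _ _ hdegM)
        rw [← Finset.mul_sum, ← hSM, hJ]
        have e2 : r * (SM + 1) ≤ r * SL := Nat.mul_le_mul_left r (by omega)
        rw [Nat.mul_add, Nat.mul_one] at e2
        omega
      have := hC J t
      linarith
    -- identities
    have hconst : ∀ nu : PartitionSeq, ∑ _i ∈ Icc 1 j, m = j * m := by
      intro _
      rw [Finset.sum_const, Nat.card_Icc, smul_eq_mul]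
      have : j + 1 - 1 = j := by omega
      rw [this]
    have hsplitL : SL = j * m + ∑ i ∈ Icc (j+1) n, lam.part i := by
      rw [hSL, sum_Icc_split_nat _ j n hjn]
      congr 1
      · calc ∑ i ∈ Icc 1 j, min (lam.part i) m = ∑ _i ∈ Icc 1 j, m := by
              apply Finset.sum_congr rfl
              intro x hx
              simp only [Finset.mem_Icc] at hx
              exact min_eq_right (lam.antitone hx.1 hx.2)
          _ = j * m := hconst lam
      · apply Finset.sum_congr rfl
        intro x hx
        simp only [Finset.mem_Icc] at hx
        exact min_eq_left (lam.antitone hj (by omega))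
    have hsplitM : SM ≤ j * m + ∑ i ∈ Icc (j+1) n, mu.part i := by
      rw [hSM, sum_Icc_split_nat _ j n hjn]
      apply Nat.add_le_add
      · calc ∑ i ∈ Icc 1 j, min (mu.part i) m ≤ ∑ _i ∈ Icc 1 j, m :=
              Finset.sum_le_sum (fun x _ => min_le_right _ _)
          _ = j * m := hconst mu
      · exact Finset.sum_le_sum (fun x _ => min_le_left _ _)
    have htailL : pSum lam j + ∑ i ∈ Icc (j+1) n, lam.part i = n := by
      have := sum_Icc_split_nat lam.part j n hjn
      have h2 : pSum lam n = n := pSum_n lam hwl n le_rfl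
      unfold pSum at *
      omega
    have htailM : pSum mu j + ∑ i ∈ Icc (j+1) n, mu.part i = n := by
      have := sum_Icc_split_nat mu.part j n hjn
      have h2 : pSum mu n = n := pSum_n mu hwm n le_rfl
      unfold pSum at *
      omega
    omega

-- MORE HERE
end DomCond

/-- **Theorem (main 1).** If `X` is an ℕ-valued random variable with `X ∈ TN₂`
and `range(X) = {0,1,…,r}` for some positive integer `r`, then for all `n ∈ ℕ`
and partitions `λ, μ` of `n`, `λ ⊵ μ` iff `C(λ,μ,X)`. -/
theorem dominance_iff_condC (p : ℕ → ℝ) (hnn : ∀ n, 0 ≤ p n) (hsum : HasSum p 1)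
    (r : ℕ) (hr : 1 ≤ r) (hrange : ∀ n, p n ≠ 0 ↔ n ≤ r)
    (hTN : IsTN 2 (toeplitz p)) :
    ∀ n : ℕ, ∀ lam mu : PartitionSeq, lam.weight = n → mu.weight = n →
      (lam.Dominates mu ↔ CondC p lam mu) := by
  intro n lam mu hwl hwm
  have hr0 : ∀ w, r < w → p w = 0 := by
    intro w hw
    by_contra h
    have := (hrange w).mp h
    omega
  have hpos : ∀ w, w ≤ r → 0 < p w := fun w hw =>
    lt_of_le_of_ne (hnn w) (Ne.symm ((hrange w).mpr hw))
  constructor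
  · intro hdom
    apply DomCond.forward p hnn r hr0 hTN n lam hwl mu hwm
    intro j
    rcases Nat.eq_zero_or_pos j with rfl | hj
    · rw [DomCond.pSum_zero, DomCond.pSum_zero]
    · exact hdom.2 j hj
  · intro hC
    constructor
    · rw [hwl, hwm]
    · intro j _
      exact DomCond.reverse p hnn r hr hr0 hpos n lam mu hwl hwm hC j
end
end

section
/- Let r be a positive integer, p ∈ (0,1), and let X = Bin(r,p) be the binomial random variable with P(X=k) = C(r,k) p^k (1−p)^{r−k} for 0 ≤ k ≤ r and P(X=k) = 0 for k > r. Then for all partitions λ and μ of the same weight n, λ dominates μ if and only if condition C(λ,μ,X) holds. -/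
open Finset

noncomputable section

/-- `(A+d)! * B! ≥ A! * (B+d)!` when `B ≤ A`. -/
lemma fact_swap_le (A B d : ℕ) (h : B ≤ A) :
    A.factorial * (B + d).factorial ≤ (A + d).factorial * B.factorial := by
  induction d with
  | zero => simp [mul_comm]
  | succ d ih =>
    have h1 : (B + (d+1)).factorial = (B + d + 1) * (B + d).factorial := by
      rw [← Nat.add_assoc]; exact Nat.factorial_succ _
    have h2 : (A + (d+1)).factorial = (A + d + 1) * (A + d).factorial := by
      rw [← Nat.add_assoc]; exact Nat.factorial_succ _
    calc A.factorial * ((B + (d+1)).factorial)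
        = (B + d + 1) * (A.factorial * (B + d).factorial) := by rw [h1]; ring
      _ ≤ (A + d + 1) * ((A + d).factorial * B.factorial) := by
          exact Nat.mul_le_mul (by omega) ih
      _ = (A + (d+1)).factorial * B.factorial := by rw [h2]; ring

/-- TN₂ property of binomial coefficients: for `b ≤ a`, `s ≤ t`,
`C(a,s)C(b,t) ≤ C(a,t)C(b,s)`. -/
lemma choose_tn2 {a b s t : ℕ} (hba : b ≤ a) (hst : s ≤ t) :
    a.choose s * b.choose t ≤ a.choose t * b.choose s := by
  rcases Nat.lt_or_ge b t with hbt | hbt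
  · simp [Nat.choose_eq_zero_of_lt hbt]
  -- now t ≤ b ≤ a, s ≤ t
  have hsb : s ≤ b := hst.trans hbt
  have hta : t ≤ a := hbt.trans hba
  have hsa : s ≤ a := hsb.trans hba
  -- multiply out with factorials
  have key : (a - t).factorial * (b - s).factorial ≤ (a - s).factorial * (b - t).factorial := by
    have := fact_swap_le (a - t) (b - t) (t - s) (by omega)
    have e1 : b - t + (t - s) = b - s := by omega
    have e2 : a - t + (t - s) = a - s := by omega
    rwa [e1, e2] at this
  have pos : 0 < t.factorial * s.factorial * ((a - t).factorial * (b - s).factorial) :=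
    Nat.mul_pos (Nat.mul_pos (Nat.factorial_pos _) (Nat.factorial_pos _))
      (Nat.mul_pos (Nat.factorial_pos _) (Nat.factorial_pos _))
  have hL : a.choose s * b.choose t * (s.factorial * (a-s).factorial * (t.factorial * (b-t).factorial)) = a.factorial * b.factorial := by
    rw [show a.choose s * b.choose t * (s.factorial * (a-s).factorial * (t.factorial * (b-t).factorial))
        = (a.choose s * s.factorial * (a-s).factorial) * (b.choose t * t.factorial * (b-t).factorial) by ring,
      Nat.choose_mul_factorial_mul_factorial hsa, Nat.choose_mul_factorial_mul_factorial hbt]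
  have hR : a.choose t * b.choose s * (t.factorial * (a-t).factorial * (s.factorial * (b-s).factorial)) = a.factorial * b.factorial := by
    rw [show a.choose t * b.choose s * (t.factorial * (a-t).factorial * (s.factorial * (b-s).factorial))
        = (a.choose t * t.factorial * (a-t).factorial) * (b.choose s * s.factorial * (b-s).factorial) by ring,
      Nat.choose_mul_factorial_mul_factorial hta, Nat.choose_mul_factorial_mul_factorial hsb]
  -- compare
  by_contra hcon
  push_neg at hcon
  have : a.choose t * b.choose s * (t.factorial * (a-t).factorial * (s.factorial * (b-s).factorial))
       < a.choose s * b.choose t * (s.factorial * (a-s).factorial * (t.factorial * (b-t).factorial)) := by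
    calc a.choose t * b.choose s * (t.factorial * (a-t).factorial * (s.factorial * (b-s).factorial))
        < a.choose s * b.choose t * (t.factorial * (a-t).factorial * (s.factorial * (b-s).factorial)) := by
          have hpos : 0 < t.factorial * (a-t).factorial * (s.factorial * (b-s).factorial) :=
            Nat.mul_pos (Nat.mul_pos (Nat.factorial_pos _) (Nat.factorial_pos _))
              (Nat.mul_pos (Nat.factorial_pos _) (Nat.factorial_pos _))
          exact Nat.mul_lt_mul_of_lt_of_le hcon (le_refl _) hpos
      _ ≤ a.choose s * b.choose t * (s.factorial * (a-s).factorial * (t.factorial * (b-t).factorial)) := by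
          apply Nat.mul_le_mul_left
          calc s.factorial * (a-s).factorial * (t.factorial * (b-t).factorial)
              ≥ s.factorial * t.factorial * ((a-t).factorial * (b-s).factorial) := by
                rw [show s.factorial * (a-s).factorial * (t.factorial * (b-t).factorial)
                    = s.factorial * t.factorial * ((a-s).factorial * (b-t).factorial) by ring]
                exact Nat.mul_le_mul_left _ key
            _ = t.factorial * (a-t).factorial * (s.factorial * (b-s).factorial) := by ring
  rw [hL, hR] at this
  exact lt_irrefl _ this

/-- One-step window inequality:
`Σ_{k∈[j−t, min j t]} C(m+1,k)C(n−1,j−k) ≤ Σ C(m,k)C(n,j−k)` for `m ≥ n ≥ 1`. -/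
lemma window_step (m n j t : ℕ) (hmn : n ≤ m) (hn : 1 ≤ n) :
    ∑ k ∈ Icc (j - t) (min j t), (m+1).choose k * (n-1).choose (j-k)
      ≤ ∑ k ∈ Icc (j - t) (min j t), m.choose k * n.choose (j-k) := by
  rcases Nat.eq_zero_or_pos j with hj | hj
  · subst hj
    simp
  set a := j - t with ha
  set b := min j t with hb
  rcases Nat.lt_or_ge b a with hab | hab
  · rw [Finset.Icc_eq_empty (by omega)]; simp
  -- T and V
  set T : ℕ → ℕ := fun k => if k ≤ j - 1 then m.choose k * (n-1).choose (j-1-k) else 0 with hT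
  set V : ℕ → ℕ := fun k => if k = 0 then 0 else T (k-1) with hV
  have term : ∀ k, k ≤ j →
      m.choose k * n.choose (j-k) + V k = (m+1).choose k * (n-1).choose (j-k) + T k := by
    intro k hk
    rcases Nat.eq_zero_or_pos k with hk0 | hk0
    · subst hk0
      have hTj : T 0 = (n-1).choose (j-1) := by
        simp only [hT]
        rw [if_pos (by omega)]
        simp
      have hpas : n.choose j = (n-1).choose (j-1) + (n-1).choose j := by
        have := Nat.choose_succ_succ (n-1) (j-1)
        have e1 : n - 1 + 1 = n := by omega
        have e2 : j - 1 + 1 = j := by omega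
        simp only [Nat.succ_eq_add_one] at this
        rw [e1, e2] at this
        omega
      simp only [hV, if_pos rfl, hTj]
      simp only [Nat.sub_zero, Nat.choose_zero_right, one_mul]
      omega
    · have hVk : V k = m.choose (k-1) * (n-1).choose (j-k) := by
        simp only [hV, hT, if_neg (by omega : ¬ k = 0), if_pos (by omega : k - 1 ≤ j - 1)]
        congr 1
        congr 1
        omega
      have hpasm : (m+1).choose k = m.choose (k-1) + m.choose k := by
        have := Nat.choose_succ_succ m (k-1)
        have e : k - 1 + 1 = k := by omega
        simp only [Nat.succ_eq_add_one] at this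
        rw [e] at this
        omega
      rcases Nat.lt_or_ge k j with hkj | hkj
      · -- 1 ≤ k < j
        have hTk : T k = m.choose k * (n-1).choose (j-1-k) := by
          simp only [hT, if_pos (by omega : k ≤ j - 1)]
        have hpasn : n.choose (j-k) = (n-1).choose (j-k-1) + (n-1).choose (j-k) := by
          have := Nat.choose_succ_succ (n-1) (j-k-1)
          have e1 : n - 1 + 1 = n := by omega
          have e2 : j - k - 1 + 1 = j - k := by omega
          simp only [Nat.succ_eq_add_one] at this
          rw [e1, e2] at this
          omega
        have e3 : j - 1 - k = j - k - 1 := by omega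
        rw [hVk, hTk, hpasm, hpasn, e3]
        ring
      · -- k = j
        have hkj' : k = j := by omega
        subst hkj'
        have hTk : T k = 0 := by simp only [hT, if_neg (by omega : ¬ k ≤ k - 1)]
        rw [hVk, hTk, hpasm, Nat.sub_self]
        simp
        omega
  -- telescoping identity by induction on b'
  have tele : ∀ b', a ≤ b' → b' ≤ j →
      (∑ k ∈ Icc a b', m.choose k * n.choose (j-k)) + V a
        = (∑ k ∈ Icc a b', (m+1).choose k * (n-1).choose (j-k)) + T b' := by
    intro b' hab' hb'j
    induction b', hab' using Nat.le_induction with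
    | base =>
      rw [Finset.Icc_self, Finset.sum_singleton, Finset.sum_singleton]
      exact term a hb'j
    | succ b' hab' ih =>
      have hb'j' : b' ≤ j := by omega
      have ih' := ih hb'j'
      have hnotmem : b' + 1 ∉ Icc a b' := by simp
      rw [show Icc a (b'+1) = insert (b'+1) (Icc a b') by
            ext x; simp [Finset.mem_Icc, Finset.mem_insert]; omega,
          Finset.sum_insert hnotmem, Finset.sum_insert hnotmem]
      have t1 := term (b'+1) hb'j
      have hVb : V (b'+1) = T b' := by simp only [hV]; rw [if_neg (by omega)]; simp
      omega
  have key := tele b hab (by omega)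
  -- compare T b and V a
  have hVT : V a ≤ T b := by
    rcases Nat.eq_zero_or_pos a with ha0 | ha0
    · simp only [hV, ha0, if_pos rfl]
      exact Nat.zero_le _
    · have htj : t < j := by omega
      have hbt : b = t := by omega
      have hVa : V a = m.choose (j-t-1) * (n-1).choose t := by
        simp only [hV, hT, if_neg (by omega : ¬ a = 0), if_pos (by omega : a - 1 ≤ j - 1)]
        have e1 : a - 1 = j - t - 1 := by omega
        have e2 : j - 1 - (a - 1) = t := by omega
        rw [e1, ← e2]
        congr 2
        omega
      have hTb : T b = m.choose t * (n-1).choose (j-1-t) := by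
        simp only [hT, hbt, if_pos (by omega : t ≤ j - 1)]
      rw [hVa, hTb]
      have e3 : j - t - 1 = j - 1 - t := by omega
      rw [e3]
      exact choose_tn2 (by omega) (by omega)
  omega

/-- Iterated window inequality. -/
lemma window_iter (m n e j t : ℕ) (hmn : n ≤ m) (he : e ≤ n) :
    ∑ k ∈ Icc (j - t) (min j t), (m+e).choose k * (n-e).choose (j-k)
      ≤ ∑ k ∈ Icc (j - t) (min j t), m.choose k * n.choose (j-k) := by
  induction e with
  | zero => simp
  | succ e ih =>
    have he' : e ≤ n := by omega
    calc ∑ k ∈ Icc (j - t) (min j t), (m+(e+1)).choose k * (n-(e+1)).choose (j-k)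
        ≤ ∑ k ∈ Icc (j - t) (min j t), (m+e).choose k * (n-e).choose (j-k) := by
          have := window_step (m+e) (n-e) j t (by omega) (by omega)
          have e1 : m + e + 1 = m + (e+1) := by omega
          have e2 : n - e - 1 = n - (e+1) := by omega
          rwa [e1, e2] at this
      _ ≤ _ := ih he'

/-- The Bernoulli-type generating series `(1-q) + q·X`. -/
noncomputable def Bser (q : ℝ) : PowerSeries ℝ :=
  PowerSeries.C (1 - q) + PowerSeries.C q * PowerSeries.X

lemma coeff_Bser_pow (q : ℝ) (M k : ℕ) :
    PowerSeries.coeff k (Bser q ^ M) = (M.choose k : ℝ) * q ^ k * (1-q) ^ (M - k) := by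
  induction M generalizing k with
  | zero =>
    cases k with
    | zero => simp
    | succ k => simp
  | succ M ih =>
    have hsplit : Bser q ^ (M+1)
        = Bser q ^ M * PowerSeries.C (1-q) + (Bser q ^ M * PowerSeries.C q) * PowerSeries.X := by
      rw [pow_succ, Bser]; ring
    rw [hsplit, map_add, PowerSeries.coeff_mul_C]
    cases k with
    | zero =>
      rw [PowerSeries.coeff_zero_mul_X, ih]
      simp [pow_succ]
    | succ k =>
      rw [PowerSeries.coeff_succ_mul_X, PowerSeries.coeff_mul_C, ih, ih]
      have hpas : (((M+1).choose (k+1) : ℕ) : ℝ) = (M.choose k : ℝ) + (M.choose (k+1) : ℝ) := by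
        push_cast [Nat.choose_succ_succ]
        ring
      rcases Nat.lt_or_ge k M with hkM | hkM
      · -- k + 1 ≤ M
        have e1 : M - (k+1) + 1 = M - k := by omega
        have e2 : M + 1 - (k+1) = M - k := by omega
        rw [hpas, e2, ← e1, pow_succ]
        ring
      · rcases Nat.eq_or_lt_of_le hkM with hkM' | hkM'
        · -- k = M
          subst hkM'
          simp [Nat.choose_succ_self, Nat.sub_self, pow_succ]
        · -- k > M
          rw [Nat.choose_eq_zero_of_lt (by omega), Nat.choose_eq_zero_of_lt (by omega),
            Nat.choose_eq_zero_of_lt (by omega)]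
          simp

/-- Coefficient of the product of two truncated powers of `Bser q`. -/
lemma coeff_truncmul (q : ℝ) (M N t j : ℕ) (hq0 : 0 ≤ q) (hq1 : q ≤ 1) :
    (PowerSeries.trunc (t+1) (Bser q ^ M) * PowerSeries.trunc (t+1) (Bser q ^ N)).coeff j
      = ((∑ k ∈ Icc (j-t) (min j t), M.choose k * N.choose (j-k) : ℕ) : ℝ)
          * (q ^ j * (1-q) ^ (M + N - j)) := by
  rw [Polynomial.coeff_mul, Finset.Nat.sum_antidiagonal_eq_sum_range_succ_mk]
  have hsub : Icc (j-t) (min j t) ⊆ range (j+1) := by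
    intro k hk
    rw [mem_Icc] at hk
    rw [mem_range]
    omega
  rw [Nat.cast_sum, Finset.sum_mul]
  rw [← Finset.sum_subset hsub ?hzero]
  · apply Finset.sum_congr rfl
    intro k hk
    rw [mem_Icc] at hk
    rw [PowerSeries.coeff_trunc, PowerSeries.coeff_trunc,
      if_pos (by omega : k < t+1), if_pos (by omega : j - k < t+1),
      coeff_Bser_pow, coeff_Bser_pow]
    rcases Nat.lt_or_ge M k with hMk | hMk
    · rw [Nat.choose_eq_zero_of_lt hMk]
      simp
    rcases Nat.lt_or_ge N (j-k) with hNk | hNk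
    · rw [Nat.choose_eq_zero_of_lt hNk]
      simp
    have e1 : q ^ k * q ^ (j-k) = q ^ j := by
      rw [← pow_add]
      congr 1
      omega
    have e2 : (1-q) ^ (M-k) * (1-q) ^ (N-(j-k)) = (1-q) ^ (M+N-j) := by
      rw [← pow_add]
      congr 1
      omega
    push_cast
    calc (M.choose k : ℝ) * q^k * (1-q)^(M-k) * ((N.choose (j-k) : ℝ) * q^(j-k) * (1-q)^(N-(j-k)))
        = (M.choose k : ℝ) * (N.choose (j-k) : ℝ) * ((q^k * q^(j-k)) * ((1-q)^(M-k) * (1-q)^(N-(j-k)))) := by ring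
      _ = (M.choose k : ℝ) * (N.choose (j-k):ℝ) * (q^j * (1-q)^(M+N-j)) := by rw [e1, e2]
  · intro k hkr hk
    rw [mem_range] at hkr
    rw [mem_Icc] at hk
    push_neg at hk
    rw [PowerSeries.coeff_trunc, PowerSeries.coeff_trunc]
    rcases Nat.lt_or_ge k (t+1) with h1 | h1
    · rw [if_neg (by omega : ¬ j - k < t+1)]
      simp
    · rw [if_neg (by omega : ¬ k < t+1)]
      simp

/-- Coefficientwise monotonicity of products of truncated powers under
unbalancing, for `m ≥ n ≥ e`. -/
lemma coeff_truncmul_le (q : ℝ) (m n e t j : ℕ) (hq0 : 0 ≤ q) (hq1 : q ≤ 1)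
    (hmn : n ≤ m) (he : e ≤ n) :
    (PowerSeries.trunc (t+1) (Bser q ^ (m+e)) * PowerSeries.trunc (t+1) (Bser q ^ (n-e))).coeff j
      ≤ (PowerSeries.trunc (t+1) (Bser q ^ m) * PowerSeries.trunc (t+1) (Bser q ^ n)).coeff j := by
  rw [coeff_truncmul q _ _ t j hq0 hq1, coeff_truncmul q _ _ t j hq0 hq1]
  have hMN : m + e + (n - e) = m + n := by omega
  rw [hMN]
  apply mul_le_mul_of_nonneg_right
  · exact_mod_cast Nat.cast_le.mpr (window_iter m n e j t hmn he)
  · exact mul_nonneg (pow_nonneg hq0 _) (pow_nonneg (by linarith) _)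

-- Part 4a : coefficientwise helpers
lemma coeff_prod_nonneg {ι : Type*} (s : Finset ι) (P : ι → Polynomial ℝ)
    (h : ∀ i ∈ s, ∀ k, 0 ≤ (P i).coeff k) : ∀ k, 0 ≤ (∏ i ∈ s, P i).coeff k := by
  classical
  refine Finset.prod_induction P (fun Q => ∀ k, 0 ≤ Q.coeff k) ?_ ?_ h
  · intro Q R hQ hR k
    rw [Polynomial.coeff_mul]
    exact Finset.sum_nonneg fun x _ => mul_nonneg (hQ _) (hR _)
  · intro k
    rcases Nat.eq_zero_or_pos k with h0 | h0
    · subst h0; simp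
    · simp [Polynomial.coeff_one, Nat.pos_iff_ne_zero.mp h0]

lemma coeff_mul_le_coeff_mul {R P Q : Polynomial ℝ} (hR : ∀ k, 0 ≤ R.coeff k)
    (hPQ : ∀ k, P.coeff k ≤ Q.coeff k) (j : ℕ) :
    (R * P).coeff j ≤ (R * Q).coeff j := by
  rw [Polynomial.coeff_mul, Polynomial.coeff_mul]
  exact Finset.sum_le_sum fun x _ => mul_le_mul_of_nonneg_left (hPQ _) (hR _)

lemma coeff_prod_eq_zero {ι : Type*} (s : Finset ι) (P : ι → Polynomial ℝ) (D : ι → ℕ)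
    (h : ∀ i ∈ s, ∀ k, D i < k → (P i).coeff k = 0) :
    ∀ k, (∑ i ∈ s, D i) < k → (∏ i ∈ s, P i).coeff k = 0 := by
  classical
  induction s using Finset.cons_induction with
  | empty =>
    intro k hk
    simp only [Finset.prod_empty]
    rw [Polynomial.coeff_one, if_neg]
    omega
  | cons a s ha ih =>
    intro k hk
    rw [Finset.prod_cons, Polynomial.coeff_mul]
    apply Finset.sum_eq_zero
    intro x hx
    rw [Finset.HasAntidiagonal.mem_antidiagonal] at hx
    rw [Finset.sum_cons] at hk
    rcases Nat.lt_or_ge (D a) x.1 with h1 | h1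
    · rw [h a (Finset.mem_cons_self a s) x.1 h1, zero_mul]
    · rw [ih (fun i hi => h i (Finset.mem_cons_of_mem hi)) x.2 (by omega), mul_zero]

lemma coeff_prod_top {ι : Type*} (s : Finset ι) (P : ι → Polynomial ℝ) (D : ι → ℕ)
    (h : ∀ i ∈ s, ∀ k, D i < k → (P i).coeff k = 0) :
    (∏ i ∈ s, P i).coeff (∑ i ∈ s, D i) = ∏ i ∈ s, (P i).coeff (D i) := by
  classical
  induction s using Finset.cons_induction with
  | empty => simp
  | cons a s ha ih =>
    rw [Finset.prod_cons, Finset.sum_cons, Finset.prod_cons, Polynomial.coeff_mul]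
    rw [Finset.sum_eq_single (D a, ∑ i ∈ s, D i)]
    · rw [ih (fun i hi => h i (Finset.mem_cons_of_mem hi))]
    · intro x hx hne
      rw [Finset.HasAntidiagonal.mem_antidiagonal] at hx
      rcases Nat.lt_or_ge (D a) x.1 with h1 | h1
      · rw [h a (Finset.mem_cons_self a s) x.1 h1, zero_mul]
      · have h2 : (∑ i ∈ s, D i) < x.2 ∨ x = (D a, ∑ i ∈ s, D i) := by
          rcases Nat.eq_or_lt_of_le h1 with he | hl
          · right
            have h3 : x.2 = ∑ i ∈ s, D i := by omega
            have : x = (x.1, x.2) := rfl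
            rw [this, ← he, h3]
          · left; omega
        rcases h2 with h2 | h2
        · rw [coeff_prod_eq_zero s P D (fun i hi => h i (Finset.mem_cons_of_mem hi)) x.2 h2,
            mul_zero]
        · exact absurd h2 hne
    · intro hmem
      exact absurd (Finset.HasAntidiagonal.mem_antidiagonal.mpr (by simp)) hmem

-- Part 4b : partition plumbing
lemma PartitionSeq.support_subset {lam : PartitionSeq} {S : ℕ}
    (hS : ∀ i, S < i → lam.part i = 0) : Function.support lam.part ⊆ ↑(Icc 1 S) := by
  intro i hi
  simp only [Function.mem_support] at hi
  simp only [Finset.coe_Icc, Set.mem_Icc]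
  constructor
  · by_contra h
    exact hi (by rw [Nat.lt_one_iff.mp (not_le.mp h), lam.zero])
  · by_contra h
    exact hi (hS i (not_le.mp h))

lemma PartitionSeq.weight_eq_sum (lam : PartitionSeq) {S : ℕ}
    (hS : ∀ i, S < i → lam.part i = 0) :
    lam.weight = ∑ i ∈ Icc 1 S, lam.part i :=
  finsum_eq_sum_of_support_subset _ (lam.support_subset hS)

lemma fPoly_eq_prod (lam : PartitionSeq) (p : ℕ → ℝ) (t : ℕ) {S : ℕ}
    (hS : ∀ i, S < i → lam.part i = 0) :
    fPoly lam p t = ∏ i ∈ Icc 1 S, PowerSeries.trunc (t + 1) (PowerSeries.mk p ^ lam.part i) := by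
  apply finprod_eq_prod_of_mulSupport_subset
  intro i hi
  apply lam.support_subset hS
  simp only [Function.mem_support]
  intro h0
  apply hi
  simp [h0, PowerSeries.trunc_one]

lemma mk_pmf_eq (r : ℕ) (q : ℝ) :
    PowerSeries.mk (fun k => if k ≤ r then (r.choose k : ℝ) * q^k * (1-q)^(r-k) else 0)
      = Bser q ^ r := by
  ext k
  rw [PowerSeries.coeff_mk, coeff_Bser_pow]
  split_ifs with h
  · rfl
  · rw [Nat.choose_eq_zero_of_lt (by omega)]
    simp

-- ### converse direction
lemma exists_bound (lam mu : PartitionSeq) :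
    ∃ S : ℕ, (∀ i, S < i → lam.part i = 0) ∧ (∀ i, S < i → mu.part i = 0) := by
  classical
  refine ⟨(lam.finSupp.toFinset ∪ mu.finSupp.toFinset).sup id, ?_, ?_⟩ <;>
  · intro i hi
    by_contra h
    have hm : i ∈ lam.finSupp.toFinset ∪ mu.finSupp.toFinset := by
      rw [Finset.mem_union]
      first
        | exact Or.inl (by rwa [Set.Finite.mem_toFinset, Function.mem_support])
        | exact Or.inr (by rwa [Set.Finite.mem_toFinset, Function.mem_support])
    have := Finset.le_sup (f := id) hm
    simp only [id] at this
    omega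

lemma condC_implies_dominates (r : ℕ) (hr : 1 ≤ r) (q : ℝ) (hq : q ∈ Set.Ioo (0:ℝ) 1)
    (lam mu : PartitionSeq) (hw : lam.weight = mu.weight)
    (hC : CondC (fun k => if k ≤ r then (r.choose k : ℝ) * q^k * (1-q)^(r-k) else 0) lam mu) :
    lam.Dominates mu := by
  classical
  set p : ℕ → ℝ := fun k => if k ≤ r then (r.choose k : ℝ) * q^k * (1-q)^(r-k) else 0 with hp
  obtain ⟨S, hSl, hSm⟩ := exists_bound lam mu
  refine ⟨hw, ?_⟩
  by_contra hcon
  push_neg at hcon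
  obtain ⟨s, hs1, hslt⟩ := hcon
  -- s ≤ S
  have hwl := lam.weight_eq_sum hSl
  have hwm := mu.weight_eq_sum hSm
  have hsS : s ≤ S := by
    by_contra h
    push_neg at h
    have hl : ∑ i ∈ Icc 1 s, lam.part i = ∑ i ∈ Icc 1 S, lam.part i := by
      symm
      apply Finset.sum_subset (Finset.Icc_subset_Icc_right (by omega))
      intro x hx1 hx
      rw [Finset.mem_Icc] at hx1
      rw [Finset.mem_Icc] at hx
      push_neg at hx
      exact hSl x (hx hx1.1)
    have hm : ∑ i ∈ Icc 1 s, mu.part i = ∑ i ∈ Icc 1 S, mu.part i := by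
      symm
      apply Finset.sum_subset (Finset.Icc_subset_Icc_right (by omega))
      intro x hx1 hx
      rw [Finset.mem_Icc] at hx1
      rw [Finset.mem_Icc] at hx
      push_neg at hx
      exact hSm x (hx hx1.1)
    rw [hl, hm, ← hwl, ← hwm, hw] at hslt
    omega
  set u := lam.part s with hu
  have hules : ∀ i, 1 ≤ i → i ≤ s → u ≤ lam.part i := fun i h1 h2 => lam.antitone h1 h2
  have hugt : ∀ i, s ≤ i → lam.part i ≤ u := fun i h2 => lam.antitone hs1 h2
  -- u ≥ 1
  have hu1 : 1 ≤ u := by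
    by_contra h
    push_neg at h
    have hu0 : u = 0 := by omega
    have : ∑ i ∈ Icc 1 S, lam.part i = ∑ i ∈ Icc 1 s, lam.part i := by
      symm
      apply Finset.sum_subset (Finset.Icc_subset_Icc_right (by omega))
      intro x hx1 hx
      rw [Finset.mem_Icc] at hx1 hx
      have := hugt x (by omega)
      omega
    have hmle : ∑ i ∈ Icc 1 s, mu.part i ≤ ∑ i ∈ Icc 1 S, mu.part i :=
      Finset.sum_le_sum_of_subset (Finset.Icc_subset_Icc_right (by omega))
    rw [← hwl, hw, hwm] at this
    omega
  -- the min-sums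
  set Mlam := ∑ i ∈ Icc 1 S, min (lam.part i) u with hMlam
  set Mmu := ∑ i ∈ Icc 1 S, min (mu.part i) u with hMmu
  have hcard : ∀ v : ℕ, ∑ _i ∈ Icc 1 v, u = v * u := by
    intro v
    rw [Finset.sum_const, Nat.card_Icc]
    simp [mul_comm]
  have h2 : ∑ i ∈ Icc 1 s, (lam.part i - u + u) = ∑ i ∈ Icc 1 s, lam.part i :=
    Finset.sum_congr rfl fun i hi => by
      rw [Finset.mem_Icc] at hi
      have := hules i hi.1 hi.2
      omega
  have h3 : ∑ i ∈ Icc 1 s, (lam.part i - u + u)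
      = (∑ i ∈ Icc 1 s, (lam.part i - u)) + s * u := by
    rw [Finset.sum_add_distrib, hcard]
  have h1 : ∑ i ∈ Icc 1 S, (lam.part i - u) = ∑ i ∈ Icc 1 s, (lam.part i - u) := by
    symm
    apply Finset.sum_subset (Finset.Icc_subset_Icc_right (by omega))
    intro x hx1 hx
    rw [Finset.mem_Icc] at hx1 hx
    have := hugt x (by omega)
    omega
  have hB1 : ∑ i ∈ Icc 1 s, (mu.part i - u) ≤ ∑ i ∈ Icc 1 S, (mu.part i - u) :=
    Finset.sum_le_sum_of_subset (Finset.Icc_subset_Icc_right (by omega))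
  have hB2 : ∑ i ∈ Icc 1 s, mu.part i ≤ ∑ i ∈ Icc 1 s, (mu.part i - u + u) :=
    Finset.sum_le_sum fun i _ => by omega
  have hB3 : ∑ i ∈ Icc 1 s, (mu.part i - u + u)
      = (∑ i ∈ Icc 1 s, (mu.part i - u)) + s * u := by
    rw [Finset.sum_add_distrib, hcard]
  have hminl : Mlam + (∑ i ∈ Icc 1 S, (lam.part i - u)) = ∑ i ∈ Icc 1 S, lam.part i := by
    rw [hMlam, ← Finset.sum_add_distrib]
    exact Finset.sum_congr rfl fun i _ => by omega
  have hminm : Mmu + (∑ i ∈ Icc 1 S, (mu.part i - u)) = ∑ i ∈ Icc 1 S, mu.part i := by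
    rw [hMmu, ← Finset.sum_add_distrib]
    exact Finset.sum_congr rfl fun i _ => by omega
  have hWeq : ∑ i ∈ Icc 1 S, lam.part i = ∑ i ∈ Icc 1 S, mu.part i := by
    rw [← hwl, ← hwm, hw]
  have hg : ∑ i ∈ Icc 1 S, (lam.part i - u) + s*u = ∑ i ∈ Icc 1 s, lam.part i := by omega
  have hh : ∑ i ∈ Icc 1 s, mu.part i ≤ (∑ i ∈ Icc 1 S, (mu.part i - u)) + s*u := by omega
  have hMlt : Mmu < Mlam := by omega
  -- now build the witness
  set t := r * u with ht
  set j := r * Mlam with hj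
  have hq0 : (0:ℝ) < q := hq.1
  have hq1 : q < 1 := hq.2
  have hmkpow : ∀ a : ℕ, PowerSeries.mk p ^ a = Bser q ^ (r * a) := by
    intro a
    rw [hp, mk_pmf_eq, ← pow_mul]
  -- vanishing above r * min(part,u)
  have hvanish : ∀ (x : PartitionSeq), ∀ i, ∀ k, r * min (x.part i) u < k →
      (PowerSeries.trunc (t + 1) (PowerSeries.mk p ^ x.part i)).coeff k = 0 := by
    intro x i k hk
    rw [hmkpow, PowerSeries.coeff_trunc]
    rcases Nat.lt_or_ge k (t+1) with h1 | h1
    · rw [if_pos h1, coeff_Bser_pow]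
      have : r * x.part i < k := by
        rcases Nat.le_total (x.part i) u with h2 | h2
        · rw [min_eq_left h2] at hk
          exact hk
        · rw [min_eq_right h2] at hk
          have : r * u < k := hk
          omega
      rw [Nat.choose_eq_zero_of_lt this]
      simp
    · rw [if_neg (by omega)]
  -- top coefficient of lam's polynomial is positive
  have hflam : fPoly lam p t
      = ∏ i ∈ Icc 1 S, PowerSeries.trunc (t + 1) (PowerSeries.mk p ^ lam.part i) :=
    fPoly_eq_prod lam p t hSl
  have hfmu : fPoly mu p t
      = ∏ i ∈ Icc 1 S, PowerSeries.trunc (t + 1) (PowerSeries.mk p ^ mu.part i) :=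
    fPoly_eq_prod mu p t hSm
  have hsumD : ∑ i ∈ Icc 1 S, r * min (lam.part i) u = j := by
    rw [hj, hMlam, Finset.mul_sum]
  have hsumDmu : ∑ i ∈ Icc 1 S, r * min (mu.part i) u = r * Mmu := by
    rw [hMmu, Finset.mul_sum]
  have hlam_pos : 0 < probE p lam j t := by
    rw [probE, hflam, ← hsumD,
      coeff_prod_top _ _ _ (fun i _ k hk => hvanish lam i k hk)]
    apply Finset.prod_pos
    intro i _
    rw [hmkpow, PowerSeries.coeff_trunc, if_pos (by
      have : min (lam.part i) u ≤ u := min_le_right _ _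
      have : r * min (lam.part i) u ≤ r * u := Nat.mul_le_mul_left r this
      omega), coeff_Bser_pow]
    have hchoose : 0 < (r * lam.part i).choose (r * min (lam.part i) u) :=
      Nat.choose_pos (Nat.mul_le_mul_left r (min_le_left _ _))
    have : (0:ℝ) < ((r * lam.part i).choose (r * min (lam.part i) u) : ℝ) := by
      exact_mod_cast hchoose
    exact mul_pos (mul_pos this (pow_pos hq0 _)) (pow_pos (by linarith) _)
  have hmu_zero : probE p mu j t = 0 := by
    rw [probE, hfmu]
    apply coeff_prod_eq_zero _ _ (fun i => r * min (mu.part i) u)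
      (fun i _ k hk => hvanish mu i k hk)
    rw [hsumDmu, hj]
    exact (Nat.mul_lt_mul_left (by omega : 0 < r)).mpr hMlt
  have := hC j t
  rw [hmu_zero] at this
  linarith

-- ### the move lemma
lemma probE_le_of_move (r : ℕ) (hr : 1 ≤ r) (q : ℝ) (hq0 : 0 < q) (hq1 : q < 1)
    (lam nu : PartitionSeq) (S a b : ℕ)
    (hSl : ∀ i, S < i → lam.part i = 0) (hSn : ∀ i, S < i → nu.part i = 0)
    (haS : a ∈ Icc 1 S) (hbS : b ∈ Icc 1 S) (hab : a ≠ b)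
    (hpa : nu.part a = lam.part a - 1) (hpb : nu.part b = lam.part b + 1)
    (hoth : ∀ i, i ≠ a → i ≠ b → nu.part i = lam.part i)
    (hgap : lam.part b + 2 ≤ lam.part a) (j t : ℕ) :
    probE (fun k => if k ≤ r then (r.choose k : ℝ) * q^k * (1-q)^(r-k) else 0) lam j t
      ≤ probE (fun k => if k ≤ r then (r.choose k : ℝ) * q^k * (1-q)^(r-k) else 0) nu j t := by
  classical
  set p : ℕ → ℝ := fun k => if k ≤ r then (r.choose k : ℝ) * q^k * (1-q)^(r-k) else 0 with hpdef
  have hmkpow : ∀ x : ℕ, PowerSeries.mk p ^ x = Bser q ^ (r * x) := by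
    intro x
    rw [hpdef, mk_pmf_eq, ← pow_mul]
  have hbmem : b ∈ (Icc 1 S).erase a := Finset.mem_erase.mpr ⟨Ne.symm hab, hbS⟩
  have htnn : ∀ c k : ℕ, 0 ≤ (PowerSeries.trunc (t+1) (PowerSeries.mk p ^ c)).coeff k := by
    intro c k
    rw [hmkpow, PowerSeries.coeff_trunc]
    split_ifs with h
    · rw [coeff_Bser_pow]
      have h1 : (0:ℝ) ≤ ((r*c).choose k : ℝ) := Nat.cast_nonneg _
      have h2 : (0:ℝ) ≤ q ^ k := pow_nonneg (le_of_lt hq0) _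
      have h3 : (0:ℝ) ≤ (1-q) ^ (r*c-k) := pow_nonneg (by linarith) _
      positivity
    · exact le_refl 0
  rw [probE, probE, fPoly_eq_prod lam p t hSl, fPoly_eq_prod nu p t hSn,
    ← Finset.mul_prod_erase _ _ haS, ← Finset.mul_prod_erase _ _ hbmem,
    ← Finset.mul_prod_erase _ _ haS, ← Finset.mul_prod_erase _ _ hbmem]
  have hR : ∏ i ∈ ((Icc 1 S).erase a).erase b,
        PowerSeries.trunc (t+1) (PowerSeries.mk p ^ nu.part i)
      = ∏ i ∈ ((Icc 1 S).erase a).erase b,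
        PowerSeries.trunc (t+1) (PowerSeries.mk p ^ lam.part i) := by
    apply Finset.prod_congr rfl
    intro i hi
    rw [Finset.mem_erase, Finset.mem_erase] at hi
    rw [hoth i hi.2.1 hi.1]
  rw [hR]
  set R := ∏ i ∈ ((Icc 1 S).erase a).erase b,
    PowerSeries.trunc (t+1) (PowerSeries.mk p ^ lam.part i) with hRdef
  have hRnn : ∀ k, 0 ≤ R.coeff k := by
    rw [hRdef]
    exact coeff_prod_nonneg _ _ (fun i _ k => htnn _ k)
  set c := lam.part a with hc
  set d := lam.part b with hd
  have harr1 : PowerSeries.trunc (t+1) (PowerSeries.mk p ^ c)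
      * (PowerSeries.trunc (t+1) (PowerSeries.mk p ^ d) * R)
      = R * (PowerSeries.trunc (t+1) (PowerSeries.mk p ^ c)
          * PowerSeries.trunc (t+1) (PowerSeries.mk p ^ d)) := by ring
  have harr2 : PowerSeries.trunc (t+1) (PowerSeries.mk p ^ nu.part a)
      * (PowerSeries.trunc (t+1) (PowerSeries.mk p ^ nu.part b) * R)
      = R * (PowerSeries.trunc (t+1) (PowerSeries.mk p ^ nu.part a)
          * PowerSeries.trunc (t+1) (PowerSeries.mk p ^ nu.part b)) := by ring
  rw [harr1, harr2]
  apply coeff_mul_le_coeff_mul hRnn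
  intro k
  rw [hpa, hpb]
  rw [hmkpow, hmkpow, hmkpow, hmkpow]
  have hgap' : d + 2 ≤ c := by rw [hc, hd]; exact hgap
  have e1 : r * c = r * (c - 1) + r := by
    rw [← Nat.mul_succ]
    congr 1
    omega
  have e2 : r * d = r * (d + 1) - r := by
    rw [Nat.mul_add, Nat.mul_one]
    omega
  rw [e1, e2]
  exact coeff_truncmul_le q (r*(c-1)) (r*(d+1)) r t k (le_of_lt hq0) (le_of_lt hq1)
    (Nat.mul_le_mul_left r (by omega)) (by
      calc r = r * 1 := (Nat.mul_one r).symm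
        _ ≤ r * (d+1) := Nat.mul_le_mul_left r (by omega))

lemma antitone_of_step (f : ℕ → ℕ) (h : ∀ i, 1 ≤ i → f (i+1) ≤ f i) :
    ∀ ⦃i j : ℕ⦄, 1 ≤ i → i ≤ j → f j ≤ f i := by
  intro i j h1 hij
  induction j, hij using Nat.le_induction with
  | base => exact le_refl _
  | succ jj hij ih => exact le_trans (h jj (by omega)) ih

lemma dominates_implies_condC (r : ℕ) (hr : 1 ≤ r) (q : ℝ) (hq : q ∈ Set.Ioo (0:ℝ) 1)
    (lam mu : PartitionSeq) (hdom : lam.Dominates mu) :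
    CondC (fun k => if k ≤ r then (r.choose k : ℝ) * q^k * (1-q)^(r-k) else 0) lam mu := by
  classical
  set p : ℕ → ℝ := fun k => if k ≤ r then (r.choose k : ℝ) * q^k * (1-q)^(r-k) else 0 with hpdef
  obtain ⟨S, hSl, hSm⟩ := exists_bound lam mu
  suffices H : ∀ N (lam' : PartitionSeq), (∀ i, S < i → lam'.part i = 0) →
      lam'.Dominates mu →
      (∑ s ∈ Icc 1 S, ((∑ i ∈ Icc 1 s, lam'.part i) - (∑ i ∈ Icc 1 s, mu.part i))) = N →
      CondC p lam' mu by
    exact H _ lam hSl hdom rfl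
  intro N
  induction N using Nat.strong_induction_on with
  | _ N ih =>
  intro lam' hbound hdom' hN
  by_cases hne : lam'.part = mu.part
  · intro j t
    rw [probE, probE, fPoly, fPoly, hne]
  -- weights over Icc 1 S agree
  have hwS : ∑ i ∈ Icc 1 S, lam'.part i = ∑ i ∈ Icc 1 S, mu.part i := by
    rw [← lam'.weight_eq_sum hbound, ← mu.weight_eq_sum hSm, hdom'.1]
  have hmemS : ∀ i, lam'.part i ≠ mu.part i → i ∈ Icc 1 S := by
    intro i hi
    rw [Finset.mem_Icc]
    constructor
    · by_contra h
      push_neg at h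
      have : i = 0 := by omega
      subst this
      exact hi (by rw [lam'.zero, mu.zero])
    · by_contra h
      push_neg at h
      exact hi (by rw [hbound i h, hSm i h])
  have hexlt : ∃ i, lam'.part i < mu.part i := by
    by_contra h
    push_neg at h
    apply hne
    funext i
    by_contra hi
    have hi' : mu.part i < lam'.part i := lt_of_le_of_ne (h i) (Ne.symm hi)
    have : ∑ i ∈ Icc 1 S, mu.part i < ∑ i ∈ Icc 1 S, lam'.part i :=
      Finset.sum_lt_sum (fun i _ => h i) ⟨i, hmemS i hi, hi'⟩
    omega
  have hexgt : ∃ i, mu.part i < lam'.part i := by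
    by_contra h
    push_neg at h
    obtain ⟨i1, hi1⟩ := hexlt
    have : ∑ i ∈ Icc 1 S, lam'.part i < ∑ i ∈ Icc 1 S, mu.part i :=
      Finset.sum_lt_sum (fun i _ => h i) ⟨i1, hmemS i1 (by omega), hi1⟩
    omega
  set a0 := Nat.find hexgt with ha0def
  have ha0 : mu.part a0 < lam'.part a0 := Nat.find_spec hexgt
  have ha0min : ∀ i, i < a0 → lam'.part i ≤ mu.part i := by
    intro i hi
    have := Nat.find_min hexgt hi
    omega
  set b0 := Nat.find hexlt with hb0def
  have hb0 : lam'.part b0 < mu.part b0 := Nat.find_spec hexlt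
  have hb0min : ∀ i, i < b0 → mu.part i ≤ lam'.part i := by
    intro i hi
    have := Nat.find_min hexlt hi
    omega
  have ha01 : 1 ≤ a0 := by
    by_contra h
    have : a0 = 0 := by omega
    rw [this, lam'.zero, mu.zero] at ha0
    omega
  have hb01 : 1 ≤ b0 := by
    by_contra h
    have : b0 = 0 := by omega
    rw [this, lam'.zero, mu.zero] at hb0
    omega
  have ha0S : a0 ≤ S := by
    have := hmemS a0 (by omega)
    rw [Finset.mem_Icc] at this
    exact this.2
  have hb0S : b0 ≤ S := by
    have := hmemS b0 (by omega)
    rw [Finset.mem_Icc] at this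
    exact this.2
  have ha0b0 : a0 < b0 := by
    by_contra h
    push_neg at h
    have hlt : ∑ i ∈ Icc 1 b0, lam'.part i < ∑ i ∈ Icc 1 b0, mu.part i := by
      apply Finset.sum_lt_sum
      · intro i hi
        rw [Finset.mem_Icc] at hi
        rcases Nat.lt_or_ge i a0 with h2 | h2
        · exact ha0min i h2
        · have : i = b0 ∧ b0 = a0 := by omega
          rw [this.1]
          omega
      · exact ⟨b0, Finset.mem_Icc.mpr ⟨hb01, le_refl _⟩, hb0⟩
    exact absurd (hdom'.2 b0 hb01) (by omega)
  have hstrict : ∀ s, a0 ≤ s → s < b0 →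
      ∑ i ∈ Icc 1 s, mu.part i < ∑ i ∈ Icc 1 s, lam'.part i := by
    intro s hs1 hs2
    apply Finset.sum_lt_sum
    · intro i hi
      rw [Finset.mem_Icc] at hi
      exact hb0min i (by omega)
    · exact ⟨a0, Finset.mem_Icc.mpr ⟨ha01, hs1⟩, ha0⟩
  set va := lam'.part a0 with hva
  set vb := lam'.part b0 with hvb
  have hval : vb + 2 ≤ va := by
    have h1 : mu.part b0 ≤ mu.part a0 := mu.antitone ha01 (le_of_lt ha0b0)
    omega
  have hva1 : 1 ≤ va := by omega
  set a' := Nat.findGreatest (fun i => lam'.part i = va) S with ha'def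
  have ha'P : lam'.part a' = va :=
    Nat.findGreatest_spec (P := fun i => lam'.part i = va) ha0S hva.symm
  have ha'ge : a0 ≤ a' := Nat.le_findGreatest (P := fun i => lam'.part i = va) ha0S hva.symm
  have ha'le : a' ≤ S := Nat.findGreatest_le S
  have h1a' : 1 ≤ a' := le_trans ha01 ha'ge
  have ha'succ : lam'.part (a'+1) < va := by
    rcases Nat.lt_or_ge S (a'+1) with h | h
    · rw [hbound _ h]
      omega
    · have hne' : ¬ (lam'.part (a'+1) = va) :=
        Nat.findGreatest_is_greatest (P := fun i => lam'.part i = va) (n := S)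
          (by rw [← ha'def]; exact Nat.lt_succ_self a') h
      have hle : lam'.part (a'+1) ≤ va := by
        rw [← ha'P]
        exact lam'.antitone h1a' (by omega)
      omega
  have hQ : ∃ i, 1 ≤ i ∧ lam'.part i = vb := ⟨b0, hb01, hvb.symm⟩
  set b' := Nat.find hQ with hb'def
  have hb'spec : 1 ≤ b' ∧ lam'.part b' = vb := Nat.find_spec hQ
  have hb'le : b' ≤ b0 := Nat.find_le ⟨hb01, hvb.symm⟩
  have hb'min : ∀ i, i < b' → ¬(1 ≤ i ∧ lam'.part i = vb) := fun i hi => Nat.find_min hQ hi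
  have ha'b' : a' < b' := by
    by_contra h
    push_neg at h
    have := lam'.antitone hb'spec.1 h
    rw [hb'spec.2, ha'P] at this
    omega
  have hprev : ∀ i, 1 ≤ i → i < b' → vb + 1 ≤ lam'.part i := by
    intro i hi1 hi2
    have h1 : lam'.part b' ≤ lam'.part i := lam'.antitone hi1 (by omega)
    have h2 := hb'min i hi2
    rw [hb'spec.2] at h1
    omega
  have hb'S : b' ≤ S := le_trans hb'le hb0S
  -- the new partition
  set nf : ℕ → ℕ := fun i => if i = a' then va - 1 else if i = b' then vb + 1 else lam'.part i
    with hnf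
  have hnfa : nf a' = va - 1 := by simp only [hnf, if_pos rfl]
  have hnfb : nf b' = vb + 1 := by
    simp only [hnf]
    rw [if_neg (show ¬ b' = a' by omega)]
    simp
  have hnfo : ∀ i, i ≠ a' → i ≠ b' → nf i = lam'.part i := by
    intro i h1 h2
    simp only [hnf]
    rw [if_neg h1, if_neg h2]
  have hnf_step : ∀ i, 1 ≤ i → nf (i+1) ≤ nf i := by
    intro i hi
    by_cases hia : i = a'
    · have hv1 : nf i = va - 1 := by rw [hia, hnfa]
      by_cases hib : i + 1 = b'
      · have hv2 : nf (i+1) = vb + 1 := by rw [hib, hnfb]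
        omega
      · have hv2 : nf (i+1) = lam'.part (i+1) := hnfo (i+1) (by omega) hib
        have hv3 : lam'.part (i+1) < va := by rw [hia]; exact ha'succ
        omega
    · by_cases hib : i = b'
      · have hv1 : nf i = vb + 1 := by rw [hib, hnfb]
        have hv2 : nf (i+1) = lam'.part (i+1) := hnfo (i+1) (by omega) (by omega)
        have h3 : lam'.part (i+1) ≤ lam'.part i := lam'.antitone hi (by omega)
        have h4 : lam'.part i = vb := by rw [hib]; exact hb'spec.2
        omega
      · have hv1 : nf i = lam'.part i := hnfo i hia hib
        by_cases h1a : i + 1 = a'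
        · have hv2 : nf (i+1) = va - 1 := by rw [h1a, hnfa]
          have h3 : lam'.part a' ≤ lam'.part i := lam'.antitone hi (by omega)
          rw [ha'P] at h3
          omega
        · by_cases h1b : i + 1 = b'
          · have hv2 : nf (i+1) = vb + 1 := by rw [h1b, hnfb]
            have := hprev i hi (by omega)
            omega
          · have hv2 : nf (i+1) = lam'.part (i+1) := hnfo (i+1) h1a h1b
            have := lam'.antitone hi (by omega : i ≤ i+1)
            omega
  set nu : PartitionSeq :=
    { part := nf
      zero := by
        rw [hnfo 0 (by omega) (by omega)]
        exact lam'.zero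
      antitone := antitone_of_step nf hnf_step
      finSupp := by
        apply Set.Finite.subset (lam'.finSupp.union (Set.finite_singleton b'))
        intro i hi
        rw [Function.mem_support] at hi
        by_cases h1 : i = b'
        · exact Or.inr (by rw [h1]; rfl)
        · by_cases h2 : i = a'
          · left
            rw [Function.mem_support]
            have hv : nf i = va - 1 := by rw [h2, hnfa]
            have hv2 : lam'.part i = va := by rw [h2]; exact ha'P
            omega
          · left
            rw [Function.mem_support]
            rwa [hnfo i h2 h1] at hi } with hnu
  have hnupart : nu.part = nf := rfl
  have hnbound : ∀ i, S < i → nu.part i = 0 := by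
    intro i hi
    rw [hnupart, hnfo i (by omega) (by omega)]
    exact hbound i hi
  -- partial sums identity
  have hsum : ∀ s, (∑ i ∈ Icc 1 s, nu.part i) + (if a' ≤ s then 1 else 0)
      = (∑ i ∈ Icc 1 s, lam'.part i) + (if b' ≤ s then 1 else 0) := by
    intro s
    rcases Nat.lt_or_ge s a' with h | h
    · rw [if_neg (by omega), if_neg (by omega)]
      congr 1
      apply Finset.sum_congr rfl
      intro i hi
      rw [Finset.mem_Icc] at hi
      rw [hnupart, hnfo i (by omega) (by omega)]
    · rcases Nat.lt_or_ge s b' with h2 | h2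
      · rw [if_pos h, if_neg (by omega)]
        have haIn : a' ∈ Icc 1 s := Finset.mem_Icc.mpr ⟨h1a', h⟩
        rw [← Finset.add_sum_erase _ _ haIn, ← Finset.add_sum_erase _ _ haIn]
        have hcongr : ∑ i ∈ (Icc 1 s).erase a', nu.part i
            = ∑ i ∈ (Icc 1 s).erase a', lam'.part i := by
          apply Finset.sum_congr rfl
          intro i hi
          rw [Finset.mem_erase, Finset.mem_Icc] at hi
          rw [hnupart, hnfo i hi.1 (by omega)]
        rw [hcongr, hnupart, hnfa, ha'P]
        omega
      · rw [if_pos h, if_pos h2]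
        have haIn : a' ∈ Icc 1 s := Finset.mem_Icc.mpr ⟨h1a', h⟩
        have hbIn : b' ∈ (Icc 1 s).erase a' :=
          Finset.mem_erase.mpr ⟨by omega, Finset.mem_Icc.mpr ⟨hb'spec.1, h2⟩⟩
        rw [← Finset.add_sum_erase _ _ haIn, ← Finset.add_sum_erase _ _ haIn,
          ← Finset.add_sum_erase _ _ hbIn, ← Finset.add_sum_erase _ _ hbIn]
        have hcongr : ∑ i ∈ ((Icc 1 s).erase a').erase b', nu.part i
            = ∑ i ∈ ((Icc 1 s).erase a').erase b', lam'.part i := by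
          apply Finset.sum_congr rfl
          intro i hi
          rw [Finset.mem_erase, Finset.mem_erase] at hi
          rw [hnupart, hnfo i hi.2.1 hi.1]
        rw [hcongr, hnupart, hnfa, hnfb, ha'P, hb'spec.2]
        omega
  have hnule : ∀ s, ∑ i ∈ Icc 1 s, nu.part i ≤ ∑ i ∈ Icc 1 s, lam'.part i := by
    intro s
    have := hsum s
    rcases Nat.lt_or_ge s a' with h | h
    · rw [if_neg (by omega), if_neg (by omega)] at this
      omega
    · rcases Nat.lt_or_ge s b' with h2 | h2
      · rw [if_pos h, if_neg (show ¬ b' ≤ s by omega)] at this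
        omega
      · rw [if_pos h, if_pos h2] at this
        omega
  have hdomnu : nu.Dominates mu := by
    constructor
    · rw [nu.weight_eq_sum hnbound, mu.weight_eq_sum hSm]
      have := hsum S
      rw [if_pos ha'le, if_pos hb'S] at this
      omega
    · intro s hs1
      have hid := hsum s
      rcases Nat.lt_or_ge s a' with h | h
      · rw [if_neg (show ¬ a' ≤ s by omega), if_neg (show ¬ b' ≤ s by omega)] at hid
        have := hdom'.2 s hs1
        omega
      · rcases Nat.lt_or_ge s b' with h2 | h2
        · rw [if_pos h, if_neg (show ¬ b' ≤ s by omega)] at hid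
          have := hstrict s (by omega) (by omega)
          omega
        · rw [if_pos h, if_pos h2] at hid
          have := hdom'.2 s hs1
          omega
  have hWlt : (∑ s ∈ Icc 1 S, ((∑ i ∈ Icc 1 s, nu.part i) - (∑ i ∈ Icc 1 s, mu.part i))) < N := by
    rw [← hN]
    apply Finset.sum_lt_sum
    · intro s _
      have := hnule s
      omega
    · refine ⟨a', Finset.mem_Icc.mpr ⟨h1a', ha'le⟩, ?_⟩
      have hid := hsum a'
      rw [if_pos (le_refl a'), if_neg (show ¬ b' ≤ a' by omega)] at hid
      have hst := hstrict a' ha'ge (by omega)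
      omega
  intro j t
  calc probE p lam' j t ≤ probE p nu j t := by
        apply probE_le_of_move r hr q hq.1 hq.2 lam' nu S a' b' hbound hnbound
          (Finset.mem_Icc.mpr ⟨h1a', ha'le⟩) (Finset.mem_Icc.mpr ⟨hb'spec.1, hb'S⟩)
          (by omega)
        · rw [hnupart, hnfa, ha'P]
        · rw [hnupart, hnfb, hb'spec.2]
        · intro i h1 h2
          rw [hnupart, hnfo i h1 h2]
        · rw [ha'P, hb'spec.2]
          exact hval
    _ ≤ probE p mu j t := ih _ hWlt nu hnbound hdomnu rfl j t

/-- **Corollary (binomial case).** For `X = Bin(r,q)` with `0 < q < 1` and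
partitions `λ, μ` of the same weight, `λ ⊵ μ` iff `C(λ,μ,X)`. -/
theorem dominance_iff_condC_binomial (r : ℕ) (hr : 1 ≤ r) (q : ℝ)
    (hq : q ∈ Set.Ioo (0 : ℝ) 1) (n : ℕ) (lam mu : PartitionSeq)
    (h1 : lam.weight = n) (h2 : mu.weight = n) :
    lam.Dominates mu ↔
      CondC (fun k => if k ≤ r then (r.choose k : ℝ) * q ^ k * (1 - q) ^ (r - k) else 0)
        lam mu := by
  constructor
  · intro hdom
    exact dominates_implies_condC r hr q hq lam mu hdom
  · intro hC
    exact condC_implies_dominates r hr q hq lam mu (h1.trans h2.symm) hC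
end
end

section
/- Let p = {p_n}_{n=0}^∞ be a sequence of real numbers. Then p is TN_2 if and only if p is non-negative and for all positive integers m and all partitions λ, μ with m non-negative parts such that λ dominates μ, one has p_λ ≤ p_μ, where p_ν = ∏_{i=1}^m p_{ν(i)}. -/
open Finset

noncomputable section

lemma sum3 {ι : Type*} [DecidableEq ι] (s : Finset ι) {i k : ι} (hi : i ∈ s) (hk : k ∈ s)
    (hik : i ≠ k) (F : ι → ℕ) :
    ∑ x ∈ s, F x = F i + (F k + ∑ x ∈ (s.erase i).erase k, F x) := by
  rw [← Finset.add_sum_erase s F hi,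
    ← Finset.add_sum_erase (s.erase i) F (Finset.mem_erase.mpr ⟨Ne.symm hik, hk⟩)]

lemma prod3 {ι : Type*} [DecidableEq ι] (s : Finset ι) {i k : ι} (hi : i ∈ s) (hk : k ∈ s)
    (hik : i ≠ k) (F : ι → ℝ) :
    ∏ x ∈ s, F x = F i * (F k * ∏ x ∈ (s.erase i).erase k, F x) := by
  rw [← Finset.mul_prod_erase s F hi,
    ← Finset.mul_prod_erase (s.erase i) F (Finset.mem_erase.mpr ⟨Ne.symm hik, hk⟩)]

lemma keyA (p : ℕ → ℝ) (hp : ∀ n, 0 ≤ p n)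
    (h2 : ∀ a b : ℕ, 1 ≤ b → b ≤ a → p (a + 1) * p (b - 1) ≤ p a * p b)
    (m : ℕ) (g : Fin m → ℕ) (hg : Antitone g) :
    ∀ M : ℕ, ∀ f : Fin m → ℕ,
      (∑ i, Nat.dist (f i) (g i)) ≤ M →
      (∑ i, f i = ∑ i, g i) →
      (∀ j : ℕ, ∑ i ∈ univ.filter (fun i : Fin m => (i : ℕ) < j), g i ≤
        ∑ i ∈ univ.filter (fun i : Fin m => (i : ℕ) < j), f i) →
      ∏ i, p (f i) ≤ ∏ i, p (g i) := by
  intro M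
  induction M with
  | zero =>
    intro f hdist _ _
    have hfg : ∀ i, f i = g i := by
      intro i
      have h0 : Nat.dist (f i) (g i) = 0 :=
        Finset.sum_eq_zero_iff.mp (Nat.le_zero.mp hdist) i (mem_univ i)
      simp [Nat.dist] at h0; omega
    exact le_of_eq (by simp [hfg])
  | succ M ih =>
    intro f hdist hsum hdom
    by_cases hfg : f = g
    · subst hfg; exact le_refl _
    have hS : (univ.filter (fun i : Fin m => f i ≠ g i)).Nonempty := by
      rcases Function.ne_iff.mp hfg with ⟨i, hi⟩
      exact ⟨i, by simp [hi]⟩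
    set i0 := (univ.filter (fun i : Fin m => f i ≠ g i)).min' hS with hi0def
    have hi0mem : f i0 ≠ g i0 := by
      have := Finset.min'_mem _ hS
      rw [Finset.mem_filter] at this
      exact this.2
    have hbelow : ∀ i : Fin m, i < i0 → f i = g i := by
      intro i hi
      by_contra hne
      exact absurd (Finset.min'_le _ i (by simp [hne])) (not_le.mpr hi)
    have hfge : g i0 < f i0 := by
      have hdj := hdom (i0.val + 1)
      have hm : i0 ∈ univ.filter (fun i : Fin m => (i : ℕ) < i0.val + 1) := by simp
      rw [← Finset.add_sum_erase _ g hm, ← Finset.add_sum_erase _ f hm] at hdj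
      have heq : ∑ x ∈ (univ.filter (fun i : Fin m => (i : ℕ) < i0.val + 1)).erase i0, f x
          = ∑ x ∈ (univ.filter (fun i : Fin m => (i : ℕ) < i0.val + 1)).erase i0, g x := by
        apply Finset.sum_congr rfl
        intro x hx
        rw [Finset.mem_erase, Finset.mem_filter] at hx
        apply hbelow
        have hxv : (x : ℕ) ≠ (i0 : ℕ) := fun h => hx.1 (Fin.val_injective h)
        have := hx.2.2
        rw [Fin.lt_def]
        omega
      rw [heq] at hdj
      have hle : g i0 ≤ f i0 := by omega
      exact lt_of_le_of_ne hle (Ne.symm hi0mem)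
    have hK : (univ.filter (fun k : Fin m => i0 < k ∧ f k < g k)).Nonempty := by
      by_contra hKe
      rw [Finset.not_nonempty_iff_eq_empty, Finset.filter_eq_empty_iff] at hKe
      have hlt : ∑ i, g i < ∑ i, f i := by
        apply Finset.sum_lt_sum
        · intro i _
          rcases lt_trichotomy i i0 with h | h | h
          · exact (hbelow i h).ge
          · subst h; exact hfge.le
          · have := hKe (mem_univ i)
            push_neg at this
            exact le_of_not_gt (fun hc => absurd (this h) (not_le.mpr hc))
        · exact ⟨i0, mem_univ _, hfge⟩
      omega
    set k0 := (univ.filter (fun k : Fin m => i0 < k ∧ f k < g k)).min' hK with hk0def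
    have hk0mem : i0 < k0 ∧ f k0 < g k0 := by
      have := Finset.min'_mem _ hK
      rw [Finset.mem_filter] at this
      exact this.2
    have hmid : ∀ i : Fin m, i0 < i → i < k0 → g i ≤ f i := by
      intro i h1 h2
      by_contra hne
      exact absurd (Finset.min'_le _ i (by simp [h1, not_le.mp hne]))
        (not_le.mpr h2)
    have hne0k : i0 ≠ k0 := ne_of_lt hk0mem.1
    have hvl : f k0 + 2 ≤ f i0 := by
      have := hg hk0mem.1.le
      omega
    set f' : Fin m → ℕ := Function.update (Function.update f i0 (f i0 - 1)) k0 (f k0 + 1)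
      with hf'def
    have hfi0 : f' i0 = f i0 - 1 := by
      rw [hf'def, Function.update_of_ne hne0k, Function.update_self]
    have hfk0 : f' k0 = f k0 + 1 := by rw [hf'def, Function.update_self]
    have hfoth : ∀ x : Fin m, x ≠ i0 → x ≠ k0 → f' x = f x := by
      intro x h1 h2
      rw [hf'def, Function.update_of_ne h2, Function.update_of_ne h1]
    have e3n : ∀ F : ℕ → ℕ → ℕ, ∑ x ∈ (univ.erase i0).erase k0, F (f' x) (g x)
        = ∑ x ∈ (univ.erase i0).erase k0, F (f x) (g x) := by
      intro F
      apply Finset.sum_congr rfl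
      intro x hx
      rw [Finset.mem_erase, Finset.mem_erase] at hx
      rw [hfoth x hx.2.1 hx.1]
    have hdist' : ∑ i, Nat.dist (f' i) (g i) ≤ M := by
      have e1 := sum3 univ (mem_univ i0) (mem_univ k0) hne0k (fun i => Nat.dist (f' i) (g i))
      have e2 := sum3 univ (mem_univ i0) (mem_univ k0) hne0k (fun i => Nat.dist (f i) (g i))
      rw [e2] at hdist
      rw [e1, e3n (fun a b => Nat.dist a b), hfi0, hfk0]
      simp only [Nat.dist] at hdist ⊢
      omega
    have hsum' : ∑ i, f' i = ∑ i, g i := by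
      have e1 := sum3 univ (mem_univ i0) (mem_univ k0) hne0k f'
      have e2 := sum3 univ (mem_univ i0) (mem_univ k0) hne0k f
      rw [e2] at hsum
      rw [e1, e3n (fun a _ => a), hfi0, hfk0]
      omega
    have hdom' : ∀ j : ℕ, ∑ i ∈ univ.filter (fun i : Fin m => (i : ℕ) < j), g i ≤
        ∑ i ∈ univ.filter (fun i : Fin m => (i : ℕ) < j), f' i := by
      intro j
      rcases le_or_gt j i0.val with hj | hj
      · have heq : ∑ i ∈ univ.filter (fun i : Fin m => (i : ℕ) < j), f' i
            = ∑ i ∈ univ.filter (fun i : Fin m => (i : ℕ) < j), f i := by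
          apply Finset.sum_congr rfl
          intro x hx
          rw [Finset.mem_filter] at hx
          have h1 : x ≠ i0 := by
            intro h; subst h; omega
          have h2 : x ≠ k0 := by
            intro h; subst h
            have := hk0mem.1
            rw [Fin.lt_def] at this
            omega
          exact hfoth x h1 h2
        rw [heq]; exact hdom j
      · have hmi : i0 ∈ univ.filter (fun i : Fin m => (i : ℕ) < j) := by
          simp [hj]
        rcases le_or_gt j k0.val with hj2 | hj2
        · have hstrict : ∑ i ∈ univ.filter (fun i : Fin m => (i : ℕ) < j), g i
              < ∑ i ∈ univ.filter (fun i : Fin m => (i : ℕ) < j), f i := by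
            apply Finset.sum_lt_sum
            · intro i hi
              rw [Finset.mem_filter] at hi
              rcases lt_trichotomy i i0 with h | h | h
              · exact (hbelow i h).ge
              · subst h; exact hfge.le
              · apply hmid i h
                rw [Fin.lt_def]
                omega
            · exact ⟨i0, hmi, hfge⟩
          have heq : ∑ x ∈ (univ.filter (fun i : Fin m => (i : ℕ) < j)).erase i0, f' x
              = ∑ x ∈ (univ.filter (fun i : Fin m => (i : ℕ) < j)).erase i0, f x := by
            apply Finset.sum_congr rfl
            intro x hx
            rw [Finset.mem_erase, Finset.mem_filter] at hx
            have h2 : x ≠ k0 := by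
              intro h; subst h; omega
            exact hfoth x hx.1 h2
          rw [← Finset.add_sum_erase _ f' hmi, ← Finset.add_sum_erase _ f hmi] at *
          rw [heq, hfi0]
          omega
        · have hmk : k0 ∈ univ.filter (fun i : Fin m => (i : ℕ) < j) := by
            simp [hj2]
          have hdj := hdom j
          rw [sum3 _ hmi hmk hne0k f'] 
          rw [sum3 _ hmi hmk hne0k f] at hdj
          have heq : ∑ x ∈ ((univ.filter (fun i : Fin m => (i : ℕ) < j)).erase i0).erase k0, f' x
              = ∑ x ∈ ((univ.filter (fun i : Fin m => (i : ℕ) < j)).erase i0).erase k0, f x := by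
            apply Finset.sum_congr rfl
            intro x hx
            rw [Finset.mem_erase, Finset.mem_erase] at hx
            exact hfoth x hx.2.1 hx.1
          rw [heq, hfi0, hfk0]
          omega
    have hprod : ∏ i, p (f i) ≤ ∏ i, p (f' i) := by
      rw [prod3 univ (mem_univ i0) (mem_univ k0) hne0k (fun i => p (f i)),
        prod3 univ (mem_univ i0) (mem_univ k0) hne0k (fun i => p (f' i))]
      have heq : ∏ x ∈ (univ.erase i0).erase k0, p (f' x)
          = ∏ x ∈ (univ.erase i0).erase k0, p (f x) := by
        apply Finset.prod_congr rfl
        intro x hx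
        rw [Finset.mem_erase, Finset.mem_erase] at hx
        rw [hfoth x hx.2.1 hx.1]
      rw [heq, hfi0, hfk0]
      have key : p (f i0) * p (f k0) ≤ p (f i0 - 1) * p (f k0 + 1) := by
        have h := h2 (f i0 - 1) (f k0 + 1) (by omega) (by omega)
        have ha : f i0 - 1 + 1 = f i0 := by omega
        rw [ha, Nat.add_sub_cancel] at h
        exact h
      have hR : (0:ℝ) ≤ ∏ x ∈ (univ.erase i0).erase k0, p (f x) :=
        Finset.prod_nonneg (fun x _ => hp _)
      rw [← mul_assoc, ← mul_assoc]
      exact mul_le_mul_of_nonneg_right key hR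
    exact le_trans hprod (ih f' hdist' hsum' hdom')
open Finset

lemma strictMonoPair {x y : ℕ} (h : x < y) : StrictMono ![x, y] := by
  intro i j hij
  fin_cases i <;> fin_cases j <;> simp_all

lemma antitonePair {x y : ℕ} (h : y ≤ x) : Antitone ![x, y] := by
  intro i j hij
  fin_cases i <;> fin_cases j <;> simp_all

lemma toeplitz_nonneg' {p : ℕ → ℝ} (hp : ∀ n, 0 ≤ p n) (i j : ℕ) : 0 ≤ toeplitz p i j := by
  simp only [toeplitz]
  split
  · exact hp _
  · exact le_refl 0


/-- **Lemma (characterization of TN₂), (i) ↔ (iii).** `p ∈ TN₂` iff `p` is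
non-negative and for all positive integers `m` and all partitions `λ, μ` with
`m` non-negative parts with `λ ⊵ μ`, one has `p_λ ≤ p_μ`. -/
theorem TN2_iff_partition_products (p : ℕ → ℝ) :
    IsTN 2 (toeplitz p) ↔
      ((∀ n, 0 ≤ p n) ∧
        ∀ m : ℕ, 1 ≤ m → ∀ lam mu : Fin m → ℕ, Antitone lam → Antitone mu →
          (∑ i, lam i = ∑ i, mu i) →
          (∀ j : ℕ, 1 ≤ j → j ≤ m →
            ∑ i ∈ Finset.univ.filter (fun i : Fin m => (i : ℕ) < j), mu i ≤
              ∑ i ∈ Finset.univ.filter (fun i : Fin m => (i : ℕ) < j), lam i) →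
          ∏ i, p (lam i) ≤ ∏ i, p (mu i)) := by
  constructor
  · intro hTN
    have hp : ∀ n, 0 ≤ p n := by
      intro n
      have hsm : StrictMono (fun _ : Fin 1 => (0 : ℕ)) :=
        fun i j h => absurd (Subsingleton.elim i j) h.ne
      have hsc : StrictMono (fun _ : Fin 1 => n) :=
        fun i j h => absurd (Subsingleton.elim i j) h.ne
      have := hTN 1 (by norm_num) _ _ hsm hsc
      rw [Matrix.det_fin_one] at this
      simpa [toeplitz] using this
    have h2 : ∀ a b : ℕ, 1 ≤ b → b ≤ a → p (a + 1) * p (b - 1) ≤ p a * p b := by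
      intro a b hb hba
      have hr : StrictMono ![0, a - b + 1] := strictMonoPair (by omega)
      have hc : StrictMono ![a, a + 1] := strictMonoPair (by omega)
      have h := hTN 2 le_rfl _ _ hr hc
      rw [Matrix.det_fin_two] at h
      simp only [Matrix.submatrix_apply, Matrix.cons_val_zero, Matrix.cons_val_one,
        Matrix.head_cons] at h
      have e00 : toeplitz p 0 a = p a := by simp [toeplitz]
      have e11 : toeplitz p (a - b + 1) (a + 1) = p b := by
        simp only [toeplitz]
        rw [if_pos (by omega)]
        congr 1
        omega
      have e01 : toeplitz p 0 (a + 1) = p (a + 1) := by simp [toeplitz]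
      have e10 : toeplitz p (a - b + 1) a = p (b - 1) := by
        simp only [toeplitz]
        rw [if_pos (by omega)]
        congr 1
        omega
      rw [e00, e11, e01, e10] at h
      linarith
    refine ⟨hp, ?_⟩
    intro m hm lam mu hlam hmu hsum hdom
    apply keyA p hp h2 m mu hmu (∑ i, Nat.dist (lam i) (mu i)) lam le_rfl hsum
    intro j
    rcases Nat.lt_or_ge j 1 with hj | hj
    · have hj0 : j = 0 := by omega
      subst hj0
      simp
    rcases le_or_gt j m with hjm | hjm
    · exact hdom j hj hjm
    · have hfil : univ.filter (fun i : Fin m => (i : ℕ) < j) = univ :=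
        Finset.filter_true_of_mem (fun i _ => lt_of_lt_of_le i.isLt (by omega))
      rw [hfil]
      exact hsum.ge
  · rintro ⟨hp, hcond⟩
    have twostep : ∀ d s t : ℕ, 1 ≤ s → 1 ≤ t → t ≤ s →
        p (d + s + t) * p d ≤ p (d + s) * p (d + t) := by
      intro d s t hs ht hts
      have h := hcond 2 (by norm_num) ![d + s + t, d] ![d + s, d + t]
        (antitonePair (by omega)) (antitonePair (by omega))
        (by simp [Fin.sum_univ_two]; omega)
        (by
          intro j hj1 hj2
          interval_cases j
          · simp [Finset.sum_filter, Fin.sum_univ_two]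
          · have hfil : univ.filter (fun i : Fin 2 => (i : ℕ) < 2) = univ :=
              Finset.filter_true_of_mem (fun i _ => i.isLt)
            rw [hfil]
            simp [Fin.sum_univ_two]
            omega)
      simpa [Fin.prod_univ_two] using h
    intro l hl r c hr hc
    interval_cases l
    · simp [Matrix.det_fin_zero]
    · rw [Matrix.det_fin_one]
      exact toeplitz_nonneg' hp _ _
    · have hr01 : r 0 < r 1 := hr (by decide : (0 : Fin 2) < 1)
      have hc01 : c 0 < c 1 := hc (by decide : (0 : Fin 2) < 1)
      rw [Matrix.det_fin_two]
      simp only [Matrix.submatrix_apply]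
      by_cases hx : r 1 ≤ c 0
      · have e00 : toeplitz p (r 0) (c 0) = p ((c 0 - r 1) + (r 1 - r 0)) := by
          simp only [toeplitz]
          rw [if_pos (by omega)]
          congr 1
          omega
        have e11 : toeplitz p (r 1) (c 1) = p ((c 0 - r 1) + (c 1 - c 0)) := by
          simp only [toeplitz]
          rw [if_pos (by omega)]
          congr 1
          omega
        have e01 : toeplitz p (r 0) (c 1) = p ((c 0 - r 1) + (r 1 - r 0) + (c 1 - c 0)) := by
          simp only [toeplitz]
          rw [if_pos (by omega)]
          congr 1
          omega
        have e10 : toeplitz p (r 1) (c 0) = p (c 0 - r 1) := by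
          simp only [toeplitz]
          rw [if_pos (by omega)]
        rw [e00, e11, e01, e10, sub_nonneg]
        set d := c 0 - r 1
        set s := r 1 - r 0
        set t := c 1 - c 0
        rcases le_total t s with h | h
        · exact twostep d s t (by omega) (by omega) h
        · have h' := twostep d t s (by omega) (by omega) h
          have ha : d + t + s = d + s + t := by omega
          rw [ha] at h'
          calc p (d + s + t) * p d ≤ p (d + t) * p (d + s) := h'
            _ = p (d + s) * p (d + t) := mul_comm _ _
      · have e10 : toeplitz p (r 1) (c 0) = 0 := by
          simp only [toeplitz]
          rw [if_neg hx]
        rw [e10, mul_zero, sub_zero]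
        exact mul_nonneg (toeplitz_nonneg' hp _ _) (toeplitz_nonneg' hp _ _)
end
end

section
/- Suppose that for all integers A, a, B, b with A ≥ B ≥ 0 and a ≥ b ≥ 0 there is an injection γ : U^A_b × U^B_a → U^A_a × U^B_b such that for all (λ₁,μ₁) ∈ U^A_b × U^B_a, the image (λ₂,μ₂) = γ(λ₁,μ₁) satisfies λ₁μ₁ ⊵ λ₂μ₂ (concatenations, compared in the dominance order). Then for every sequence p = {p_n}_{n=0}^∞ of real numbers, if the Toeplitz matrix T_p is TN_2 then the matrix S_p is TN_2. -/
open Finset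

noncomputable section

/-- `f ⊵ g` for compositions with `m` non-negative parts: the non-increasing
rearrangements have equal total sums and the partial sums of the rearrangement
of `f` dominate those of `g`. -/
def CompDominates {m : ℕ} (f g : Fin m → ℕ) : Prop :=
  ∃ σ τ : Equiv.Perm (Fin m), Antitone (f ∘ σ) ∧ Antitone (g ∘ τ) ∧
    (∑ i, f i = ∑ i, g i) ∧
    ∀ j : ℕ, j ≤ m →
      ∑ i ∈ Finset.univ.filter (fun i : Fin m => (i : ℕ) < j), g (τ i) ≤
        ∑ i ∈ Finset.univ.filter (fun i : Fin m => (i : ℕ) < j), f (σ i)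



lemma tn_core (p : ℕ → ℝ) (hpos : ∀ n, 0 ≤ p n)
    (key : ∀ u v : ℕ, v + 1 ≤ u → p u * p v ≤ p (u - 1) * p (v + 1))
    (m : ℕ) :
    ∀ N : ℕ, ∀ f g : ℕ → ℕ, Antitone f → Antitone g →
    (∀ i, m ≤ i → f i = 0) → (∀ i, m ≤ i → g i = 0) →
    (∀ j, ∑ i ∈ range j, g i ≤ ∑ i ∈ range j, f i) →
    (∑ i ∈ range m, f i = ∑ i ∈ range m, g i) →
    (∑ j ∈ range (m + 1), (∑ i ∈ range j, f i - ∑ i ∈ range j, g i) = N) →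
    ∏ i ∈ range m, p (f i) ≤ ∏ i ∈ range m, p (g i) := by
  intro N
  induction N using Nat.strong_induction_on with
  | _ N IH =>
    intro f g hf hg hfs hgs hdom htot hmeas
    by_cases hN : N = 0
    · subst hN
      have hz : ∀ j ∈ range (m+1), (∑ i ∈ range j, f i - ∑ i ∈ range j, g i) = 0 :=
        Finset.sum_eq_zero_iff.mp hmeas
      have heq : ∀ j, j ≤ m → ∑ i ∈ range j, f i = ∑ i ∈ range j, g i := by
        intro j hj
        have h1 := hz j (mem_range.mpr (by omega))
        have h2 := hdom j
        omega
      refine le_of_eq (Finset.prod_congr rfl ?_)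
      intro i hi
      have hi' := mem_range.mp hi
      have e1 := heq i (by omega)
      have e2 := heq (i+1) (by omega)
      rw [Finset.sum_range_succ, Finset.sum_range_succ] at e2
      have heqi : f i = g i := by omega
      rw [heqi]
    · have hne : ∃ i, f i ≠ g i := by
        by_contra h
        push_neg at h
        apply hN
        rw [← hmeas]
        apply Finset.sum_eq_zero
        intro j _
        have : ∑ i ∈ range j, f i = ∑ i ∈ range j, g i :=
          Finset.sum_congr rfl fun i _ => h i
        omega
      set j₀ := Nat.find hne with hj₀def
      have hj₀ : f j₀ ≠ g j₀ := Nat.find_spec hne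
      have hj₀min : ∀ i, i < j₀ → f i = g i := by
        intro i hi
        have := Nat.find_min hne hi
        tauto
      have hfgj₀ : g j₀ < f j₀ := by
        rcases Nat.lt_or_ge (f j₀) (g j₀) with h | h
        · exfalso
          have hd := hdom (j₀ + 1)
          rw [Finset.sum_range_succ, Finset.sum_range_succ] at hd
          have hps : ∑ i ∈ range j₀, f i = ∑ i ∈ range j₀, g i :=
            Finset.sum_congr rfl fun i hi => hj₀min i (mem_range.mp hi)
          omega
        · omega
      have hj₀m : j₀ < m := by
        by_contra h
        push_neg at h
        rw [hfs j₀ h, hgs j₀ h] at hj₀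
        exact hj₀ rfl
      have hk : ∃ i, f i < g i := by
        by_contra h
        push_neg at h
        have hlt : ∑ i ∈ range m, g i < ∑ i ∈ range m, f i :=
          Finset.sum_lt_sum (fun i _ => h i) ⟨j₀, mem_range.mpr hj₀m, hfgj₀⟩
        omega
      set k₀ := Nat.find hk with hk₀def
      have hk₀ : f k₀ < g k₀ := Nat.find_spec hk
      have hk₀min : ∀ i, i < k₀ → g i ≤ f i := fun i hi =>
        le_of_not_gt (Nat.find_min hk hi)
      have hk₀m : k₀ < m := by
        by_contra h
        push_neg at h
        rw [hfs k₀ h, hgs k₀ h] at hk₀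
        omega
      have hj₀k₀ : j₀ < k₀ := by
        rcases Nat.lt_trichotomy j₀ k₀ with h | h | h
        · exact h
        · rw [h] at hfgj₀; omega
        · have := hj₀min k₀ h; omega
      have hbig : f k₀ + 2 ≤ f j₀ := by
        have h1 : g k₀ ≤ g j₀ := hg (le_of_lt hj₀k₀)
        omega
      have he : ∃ i, f i < f j₀ := ⟨k₀, by omega⟩
      set e := Nat.find he with hedef
      have he1 : f e < f j₀ := Nat.find_spec he
      have hemin : ∀ i, i < e → f j₀ ≤ f i := fun i hi => le_of_not_gt (Nat.find_min he hi)
      have hej₀ : j₀ < e := by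
        rcases Nat.lt_or_ge j₀ e with h | h
        · exact h
        · have := hf h
          omega
      have hek₀ : e ≤ k₀ := Nat.find_le (by omega)
      set j' := e - 1 with hj'def
      have hj'e : j' + 1 = e := by omega
      have hfj' : f j' = f j₀ := le_antisymm (hf (by omega)) (hemin j' (by omega))
      have hj'k₀ : j' < k₀ := by omega
      have hprev : f k₀ + 1 ≤ f (k₀ - 1) := by
        have h1 : g k₀ ≤ g (k₀ - 1) := hg (by omega)
        have h2 : g (k₀ - 1) ≤ f (k₀ - 1) := hk₀min _ (by omega)
        omega
      set f' : ℕ → ℕ := fun i => if i = j' then f i - 1 else if i = k₀ then f i + 1 else f i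
        with hf'def
      have hf'j' : f' j' = f j' - 1 := by simp only [hf'def, if_pos rfl]
      have hf'k₀ : f' k₀ = f k₀ + 1 := by
        simp only [hf'def]
        rw [if_neg (by omega)]
        simp
      have hf'other : ∀ i, i ≠ j' → i ≠ k₀ → f' i = f i := by
        intro i h1 h2
        simp only [hf'def, if_neg h1, if_neg h2]
      have hf' : Antitone f' := by
        apply antitone_nat_of_succ_le
        intro i
        rcases eq_or_ne i j' with rfl | h1
        · rw [hf'j']
          rcases eq_or_ne (j'+1) k₀ with h2 | h2
          · rw [h2, hf'k₀]
            have : 2 ≤ f j' := by rw [hfj']; omega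
            have h9 : f j' = f j₀ := hfj'
            omega
          · rw [hf'other _ (by omega) h2]
            have hst : f (j'+1) < f j' := by
              rw [hj'e, hfj']
              exact he1
            omega
        · rcases eq_or_ne i k₀ with rfl | h2
          · rw [hf'k₀, hf'other _ (by omega) (by omega)]
            have : f (k₀+1) ≤ f k₀ := hf (by omega)
            omega
          · rw [hf'other _ h1 h2]
            rcases eq_or_ne (i+1) j' with h3 | h3
            · rw [h3, hf'j']
              have h5 : f j' ≤ f i := by rw [← h3]; exact hf (Nat.le_succ i)
              omega
            · rcases eq_or_ne (i+1) k₀ with h4 | h4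
              · rw [h4, hf'k₀]
                have h6 : i = k₀ - 1 := by omega
                rw [h6]
                exact hprev
              · rw [hf'other _ h3 h4]
                exact hf (Nat.le_succ i)
      have hf's : ∀ i, m ≤ i → f' i = 0 := by
        intro i hi
        rw [hf'other i (by omega) (by omega)]
        exact hfs i hi
      have hps1 : ∀ j, j ≤ j' → ∑ i ∈ range j, f' i = ∑ i ∈ range j, f i := by
        intro j hj
        refine Finset.sum_congr rfl fun i hi => ?_
        have := mem_range.mp hi
        exact hf'other i (by omega) (by omega)
      have hps2 : ∀ j, j' < j → j ≤ k₀ → (∑ i ∈ range j, f' i) + 1 = ∑ i ∈ range j, f i := by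
        intro j h1 h2
        have hj'mem : j' ∈ range j := mem_range.mpr (by omega)
        rw [← Finset.add_sum_erase _ f' hj'mem, ← Finset.add_sum_erase _ f hj'mem]
        have hr : ∑ i ∈ (range j).erase j', f' i = ∑ i ∈ (range j).erase j', f i := by
          refine Finset.sum_congr rfl fun i hi => ?_
          have h3 := Finset.mem_erase.mp hi
          have h4 := mem_range.mp h3.2
          exact hf'other i h3.1 (by omega)
        rw [hr, hf'j']
        have : 2 ≤ f j' := by rw [hfj']; omega
        omega
      have hps3 : ∀ j, k₀ < j → ∑ i ∈ range j, f' i = ∑ i ∈ range j, f i := by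
        intro j h1
        have hj'mem : j' ∈ range j := mem_range.mpr (by omega)
        have hk₀mem : k₀ ∈ (range j).erase j' :=
          Finset.mem_erase.mpr ⟨by omega, mem_range.mpr (by omega)⟩
        rw [← Finset.add_sum_erase _ f' hj'mem, ← Finset.add_sum_erase _ f hj'mem,
            ← Finset.add_sum_erase _ f' hk₀mem, ← Finset.add_sum_erase _ f hk₀mem]
        have hr : ∑ i ∈ ((range j).erase j').erase k₀, f' i
            = ∑ i ∈ ((range j).erase j').erase k₀, f i := by
          refine Finset.sum_congr rfl fun i hi => ?_
          have h3 := Finset.mem_erase.mp hi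
          have h4 := Finset.mem_erase.mp h3.2
          exact hf'other i h4.1 h3.1
        rw [hr, hf'j', hf'k₀]
        have : 2 ≤ f j' := by rw [hfj']; omega
        omega
      have hstrict : ∀ j, j₀ < j → j ≤ k₀ → (∑ i ∈ range j, g i) + 1 ≤ ∑ i ∈ range j, f i := by
        intro j h1 h2
        have hlt : ∑ i ∈ range j, g i < ∑ i ∈ range j, f i := by
          refine Finset.sum_lt_sum (fun i hi => ?_) ⟨j₀, mem_range.mpr (by omega), hfgj₀⟩
          have := mem_range.mp hi
          exact hk₀min i (by omega)
        omega
      have hdom' : ∀ j, ∑ i ∈ range j, g i ≤ ∑ i ∈ range j, f' i := by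
        intro j
        rcases le_or_gt j j' with h | h
        · rw [hps1 j h]; exact hdom j
        · rcases le_or_gt j k₀ with h2 | h2
          · have ha := hps2 j h h2
            have hb := hstrict j (by omega) h2
            omega
          · rw [hps3 j h2]; exact hdom j
      have htot' : ∑ i ∈ range m, f' i = ∑ i ∈ range m, g i := by
        rw [hps3 m hk₀m]; exact htot
      have hlt : ∑ j ∈ range (m+1), (∑ i ∈ range j, f' i - ∑ i ∈ range j, g i) < N := by
        rw [← hmeas]
        apply Finset.sum_lt_sum
        · intro j _
          rcases le_or_gt j j' with h | h
          · rw [hps1 j h]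
          · rcases le_or_gt j k₀ with h2 | h2
            · have := hps2 j h h2
              omega
            · rw [hps3 j h2]
        · refine ⟨k₀, mem_range.mpr (by omega), ?_⟩
          have h1 := hps2 k₀ hj'k₀ le_rfl
          have h2 := hstrict k₀ (by omega) le_rfl
          omega
      have hIH := IH _ hlt f' g hf' hg hf's hgs hdom' htot' rfl
      have hj'mem : j' ∈ range m := mem_range.mpr (by omega)
      have hk₀mem : k₀ ∈ (range m).erase j' :=
        Finset.mem_erase.mpr ⟨by omega, mem_range.mpr hk₀m⟩
      have hRnn : 0 ≤ ∏ i ∈ ((range m).erase j').erase k₀, p (f i) :=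
        Finset.prod_nonneg fun i _ => hpos _
      have hrest : ∏ i ∈ ((range m).erase j').erase k₀, p (f' i)
          = ∏ i ∈ ((range m).erase j').erase k₀, p (f i) := by
        refine Finset.prod_congr rfl fun i hi => ?_
        have h3 := Finset.mem_erase.mp hi
        have h4 := Finset.mem_erase.mp h3.2
        rw [hf'other i h4.1 h3.1]
      have hexp1 : ∏ i ∈ range m, p (f i)
          = p (f j') * (p (f k₀) * ∏ i ∈ ((range m).erase j').erase k₀, p (f i)) := by
        rw [← Finset.mul_prod_erase (range m) _ hj'mem,
            ← Finset.mul_prod_erase _ _ hk₀mem]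
      have hexp2 : ∏ i ∈ range m, p (f' i)
          = p (f j' - 1) * (p (f k₀ + 1) * ∏ i ∈ ((range m).erase j').erase k₀, p (f i)) := by
        rw [← Finset.mul_prod_erase (range m) (fun i => p (f' i)) hj'mem,
            ← Finset.mul_prod_erase _ (fun i => p (f' i)) hk₀mem, hrest, hf'j', hf'k₀]
      have hkey := key (f j') (f k₀) (by rw [hfj']; omega)
      have hstep : ∏ i ∈ range m, p (f i) ≤ ∏ i ∈ range m, p (f' i) := by
        rw [hexp1, hexp2, ← mul_assoc, ← mul_assoc]
        exact mul_le_mul_of_nonneg_right hkey hRnn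
      exact hstep.trans hIH

lemma sum_dite_range {m : ℕ} (h : Fin m → ℕ) (j : ℕ) :
    ∑ i ∈ range j, (if hi : i < m then h ⟨i, hi⟩ else 0)
      = ∑ i ∈ Finset.univ.filter (fun i : Fin m => (i : ℕ) < j), h i := by
  induction j with
  | zero => simp
  | succ j IH =>
    rw [Finset.sum_range_succ, IH]
    by_cases hj : j < m
    · have hins : Finset.univ.filter (fun i : Fin m => (i : ℕ) < j + 1)
          = insert ⟨j, hj⟩ (Finset.univ.filter (fun i : Fin m => (i : ℕ) < j)) := by
        ext i
        simp only [Finset.mem_filter, Finset.mem_insert, Finset.mem_univ, true_and]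
        constructor
        · intro hi
          rcases Nat.lt_or_ge (i : ℕ) j with h1 | h1
          · exact Or.inr h1
          · left; apply Fin.ext; simp; omega
        · rintro (rfl | hi)
          · exact Nat.lt_succ_self j
          · omega
      rw [hins, Finset.sum_insert (by simp), dif_pos hj]
      exact add_comm _ _
    · have hfeq : Finset.univ.filter (fun i : Fin m => (i : ℕ) < j + 1)
          = Finset.univ.filter (fun i : Fin m => (i : ℕ) < j) := by
        ext i
        simp only [Finset.mem_filter, Finset.mem_univ, true_and]
        have := i.isLt
        omega
      rw [dif_neg hj, hfeq, add_zero]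

lemma compdom_prod (p : ℕ → ℝ) (hpos : ∀ n, 0 ≤ p n)
    (key : ∀ u v : ℕ, v + 1 ≤ u → p u * p v ≤ p (u - 1) * p (v + 1))
    {m : ℕ} {f g : Fin m → ℕ} (h : CompDominates f g) :
    ∏ i, p (f i) ≤ ∏ i, p (g i) := by
  obtain ⟨σ, τ, hfa, hga, hsum, hdom⟩ := h
  set F : ℕ → ℕ := fun i => if hi : i < m then f (σ ⟨i, hi⟩) else 0 with hF
  set G : ℕ → ℕ := fun i => if hi : i < m then g (τ ⟨i, hi⟩) else 0 with hG
  have hFa : Antitone F := by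
    intro a b hab
    by_cases hb : b < m
    · have ha : a < m := lt_of_le_of_lt hab hb
      simp only [hF, dif_pos hb, dif_pos ha]
      exact hfa (show (⟨a, ha⟩ : Fin m) ≤ ⟨b, hb⟩ from hab)
    · simp only [hF, dif_neg hb]
      exact Nat.zero_le _
  have hGa : Antitone G := by
    intro a b hab
    by_cases hb : b < m
    · have ha : a < m := lt_of_le_of_lt hab hb
      simp only [hG, dif_pos hb, dif_pos ha]
      exact hga (show (⟨a, ha⟩ : Fin m) ≤ ⟨b, hb⟩ from hab)
    · simp only [hG, dif_neg hb]
      exact Nat.zero_le _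
  have hFs : ∀ i, m ≤ i → F i = 0 := fun i hi => dif_neg (by omega)
  have hGs : ∀ i, m ≤ i → G i = 0 := fun i hi => dif_neg (by omega)
  have hPSF : ∀ j, ∑ i ∈ range j, F i
      = ∑ i ∈ Finset.univ.filter (fun i : Fin m => (i : ℕ) < j), f (σ i) :=
    fun j => sum_dite_range (fun i => f (σ i)) j
  have hPSG : ∀ j, ∑ i ∈ range j, G i
      = ∑ i ∈ Finset.univ.filter (fun i : Fin m => (i : ℕ) < j), g (τ i) :=
    fun j => sum_dite_range (fun i => g (τ i)) j
  have hfiltm : ∀ j, m ≤ j → Finset.univ.filter (fun i : Fin m => (i : ℕ) < j)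
      = Finset.univ := by
    intro j hj
    ext i
    simp only [Finset.mem_filter, Finset.mem_univ, true_and, iff_true]
    have := i.isLt; omega
  have htotF : ∑ i ∈ range m, F i = ∑ i, f i := by
    rw [hPSF, hfiltm m le_rfl]
    exact Equiv.sum_comp σ f
  have htotG : ∑ i ∈ range m, G i = ∑ i, g i := by
    rw [hPSG, hfiltm m le_rfl]
    exact Equiv.sum_comp τ g
  have hdom' : ∀ j, ∑ i ∈ range j, G i ≤ ∑ i ∈ range j, F i := by
    intro j
    rcases le_or_gt j m with hjm | hjm
    · rw [hPSF, hPSG]; exact hdom j hjm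
    · have h1 : ∑ i ∈ range j, F i = ∑ i ∈ range m, F i :=
        (Finset.sum_subset (Finset.range_subset_range.mpr hjm.le)
          (fun x _ hx => hFs x (by simpa using hx))).symm
      have h2 : ∑ i ∈ range j, G i = ∑ i ∈ range m, G i :=
        (Finset.sum_subset (Finset.range_subset_range.mpr hjm.le)
          (fun x _ hx => hGs x (by simpa using hx))).symm
      rw [h1, h2, hPSF, hPSG]
      exact hdom m le_rfl
  have htot : ∑ i ∈ range m, F i = ∑ i ∈ range m, G i := by
    rw [htotF, htotG, hsum]
  have hcore := tn_core p hpos key m _ F G hFa hGa hFs hGs hdom' htot rfl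
  have hprodF : ∏ i ∈ range m, p (F i) = ∏ i, p (f i) := by
    rw [← Fin.prod_univ_eq_prod_range (fun i => p (F i)) m]
    rw [← Equiv.prod_comp σ (fun i => p (f i))]
    refine Finset.prod_congr rfl fun i _ => ?_
    simp only [hF, Fin.is_lt, dif_pos, Fin.eta]
  have hprodG : ∏ i ∈ range m, p (G i) = ∏ i, p (g i) := by
    rw [← Fin.prod_univ_eq_prod_range (fun i => p (G i)) m]
    rw [← Equiv.prod_comp τ (fun i => p (g i))]
    refine Finset.prod_congr rfl fun i _ => ?_
    simp only [hG, Fin.is_lt, dif_pos, Fin.eta]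
  rw [← hprodF, ← hprodG]
  exact hcore

lemma coeff_mk_pow (p : ℕ → ℝ) (k n : ℕ) :
    PowerSeries.coeff n (PowerSeries.mk p ^ k)
      = ∑ f ∈ Finset.Nat.antidiagonalTuple k n, ∏ i, p (f i) := by
  rw [PowerSeries.coeff_pow]
  refine Finset.sum_nbij' (fun l => fun i : Fin k => l (i : ℕ))
    (fun f => Finsupp.onFinset (range k) (fun i => if hi : i < k then f ⟨i, hi⟩ else 0)
      (fun a ha => by
        by_cases h : a < k
        · exact mem_range.mpr h
        · simp [h] at ha))
    ?_ ?_ ?_ ?_ ?_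
  · intro l hl
    rw [Finset.mem_finsuppAntidiag] at hl
    rw [Finset.Nat.mem_antidiagonalTuple]
    rw [← hl.1]
    exact (Fin.sum_univ_eq_sum_range (fun i => l i) k)
  · intro f hf
    rw [Finset.Nat.mem_antidiagonalTuple] at hf
    rw [Finset.mem_finsuppAntidiag]
    constructor
    · rw [Finset.sum_congr rfl (fun i hi => ?_), ← hf,
        ← Fin.sum_univ_eq_sum_range (fun i => if hi : i < k then f ⟨i, hi⟩ else 0) k]
      · refine Finset.sum_congr rfl fun i _ => ?_
        simp [i.isLt]
      · exact Finsupp.onFinset_apply ..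
    · exact Finsupp.support_onFinset_subset
  · intro l hl
    rw [Finset.mem_finsuppAntidiag] at hl
    ext a
    rw [Finsupp.onFinset_apply]
    by_cases h : a < k
    · simp [h]
    · rw [dif_neg h]
      by_contra hc
      have : a ∈ l.support := Finsupp.mem_support_iff.mpr fun h0 => hc h0.symm
      have := hl.2 this
      simp at this
      omega
  · intro f hf
    funext i
    simp [Finsupp.onFinset_apply, i.isLt]
  · intro l hl
    rw [← Fin.prod_univ_eq_prod_range (fun i => PowerSeries.coeff (l i) (PowerSeries.mk p)) k]
    refine Finset.prod_congr rfl fun i _ => ?_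
    rw [PowerSeries.coeff_mk]

lemma strictMono_vec2 {a b : ℕ} (h : a < b) : StrictMono ![a, b] := by
  intro i j hij
  fin_cases i <;> fin_cases j <;>
    simp_all [Matrix.cons_val_zero, Matrix.cons_val_one]


/-- **Theorem.** The combinatorial conjecture (existence, for all
`A ≥ B ≥ 0`, `a ≥ b ≥ 0`, of an injection `γ : U^A_b × U^B_a ↪ U^A_a × U^B_b`
with `λ₁μ₁ ⊵ γ(λ₁,μ₁)` as concatenations) implies the case `k = 2` of
Theorem 3: `T_p ∈ TN₂ → S_p ∈ TN₂`. -/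
theorem conjecture_implies_TN2_case
    (hconj : ∀ A B a b : ℕ, B ≤ A → b ≤ a →
      ∃ γ : ({f : Fin A → ℕ // ∑ i, f i = b} × {g : Fin B → ℕ // ∑ i, g i = a}) →
            ({f : Fin A → ℕ // ∑ i, f i = a} × {g : Fin B → ℕ // ∑ i, g i = b}),
        Function.Injective γ ∧
        ∀ x, CompDominates (Fin.append x.1.1 x.2.1)
              (Fin.append (γ x).1.1 (γ x).2.1)) :
    ∀ p : ℕ → ℝ, IsTN 2 (toeplitz p) → IsTN 2 (sMatrix p) := by
  intro p hTp
  have hpos : ∀ n, 0 ≤ p n := by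
    intro n
    have h := hTp 1 (by norm_num) ![0] ![n]
      (fun x y hxy => absurd (Subsingleton.elim x y) hxy.ne)
      (fun x y hxy => absurd (Subsingleton.elim x y) hxy.ne)
    rw [Matrix.det_fin_one] at h
    simpa [toeplitz, Matrix.submatrix] using h
  have key : ∀ u v : ℕ, v + 1 ≤ u → p u * p v ≤ p (u - 1) * p (v + 1) := by
    intro u v huv
    rcases eq_or_lt_of_le huv with h | h
    · subst h
      simp only [Nat.add_sub_cancel]
      exact le_of_eq (mul_comm _ _)
    · have h2 := hTp 2 le_rfl ![0, 1] ![v + 1, u] (strictMono_vec2 (by norm_num))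
        (strictMono_vec2 h)
      rw [Matrix.det_fin_two] at h2
      simp only [Matrix.submatrix_apply, Matrix.cons_val_zero, Matrix.cons_val_one,
        Matrix.head_cons, toeplitz] at h2
      simp only [show (0:ℕ) ≤ v + 1 from by omega, show 1 ≤ u from by omega,
        show (0:ℕ) ≤ u from by omega, show 1 ≤ v + 1 from by omega, if_true] at h2
      simp only [Nat.sub_zero, Nat.add_sub_cancel] at h2
      linarith
  have hSab : ∀ (i j : ℕ), sMatrix p i j
      = ∑ f ∈ Finset.Nat.antidiagonalTuple i j, ∏ t, p (f t) :=
    fun i j => coeff_mk_pow p i j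
  intro l hl r c hr hc
  interval_cases l
  · rw [Matrix.det_isEmpty]
    norm_num
  · rw [Matrix.det_fin_one]
    simp only [Matrix.submatrix_apply]
    rw [hSab]
    exact Finset.sum_nonneg fun f _ => Finset.prod_nonneg fun i _ => hpos _
  · rw [Matrix.det_fin_two]
    simp only [Matrix.submatrix_apply]
    have hBA : r 0 < r 1 := hr (by norm_num : (0 : Fin 2) < 1)
    have hba : c 0 < c 1 := hc (by norm_num : (0 : Fin 2) < 1)
    set B := r 0 with hB
    set A := r 1 with hA
    set b := c 0 with hb
    set a := c 1 with ha
    obtain ⟨γ, hγinj, hγdom⟩ := hconj A B a b hBA.le hba.le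
    set w : (Fin A → ℕ) × (Fin B → ℕ) → ℝ :=
      fun x => (∏ i, p (x.1 i)) * (∏ i, p (x.2 i)) with hw
    set s := (Finset.Nat.antidiagonalTuple A b) ×ˢ (Finset.Nat.antidiagonalTuple B a) with hs
    set t := (Finset.Nat.antidiagonalTuple A a) ×ˢ (Finset.Nat.antidiagonalTuple B b) with ht
    have h1 : sMatrix p A b * sMatrix p B a = ∑ x ∈ s, w x := by
      rw [hSab, hSab, Finset.sum_mul_sum, hs, Finset.sum_product]
    have h2 : sMatrix p A a * sMatrix p B b = ∑ x ∈ t, w x := by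
      rw [hSab, hSab, Finset.sum_mul_sum, ht, Finset.sum_product]
    have hmk : ∀ x : {x // x ∈ s}, (∑ i, (x.1.1) i = b) ∧ (∑ i, (x.1.2) i = a) := by
      intro x
      have hx := Finset.mem_product.mp x.2
      exact ⟨Finset.Nat.mem_antidiagonalTuple.mp hx.1,
        Finset.Nat.mem_antidiagonalTuple.mp hx.2⟩
    set Γ : {x // x ∈ s} → (Fin A → ℕ) × (Fin B → ℕ) :=
      fun x => ((γ ⟨⟨x.1.1, (hmk x).1⟩, ⟨x.1.2, (hmk x).2⟩⟩).1.1,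
                (γ ⟨⟨x.1.1, (hmk x).1⟩, ⟨x.1.2, (hmk x).2⟩⟩).2.1) with hΓ
    have happ : ∀ (u : Fin A → ℕ) (v : Fin B → ℕ),
        (∏ i, p (Fin.append u v i)) = (∏ i, p (u i)) * (∏ i, p (v i)) := by
      intro u v
      rw [Fin.prod_univ_add (f := fun i => p (Fin.append u v i))]
      simp [Fin.append_left, Fin.append_right]
    have step1 : ∑ x ∈ s, w x ≤ ∑ x ∈ s.attach, w (Γ x) := by
      rw [← Finset.sum_attach s w]
      refine Finset.sum_le_sum fun x _ => ?_
      have hd := hγdom ⟨⟨x.1.1, (hmk x).1⟩, ⟨x.1.2, (hmk x).2⟩⟩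
      calc w x.1 = ∏ i, p (Fin.append x.1.1 x.1.2 i) := (happ _ _).symm
        _ ≤ ∏ i, p (Fin.append (Γ x).1 (Γ x).2 i) := compdom_prod p hpos key hd
        _ = w (Γ x) := happ _ _
    have hΓinj : ∀ x ∈ s.attach, ∀ y ∈ s.attach, Γ x = Γ y → x = y := by
      intro x _ y _ hxy
      have h1' : γ ⟨⟨x.1.1, (hmk x).1⟩, ⟨x.1.2, (hmk x).2⟩⟩
          = γ ⟨⟨y.1.1, (hmk y).1⟩, ⟨y.1.2, (hmk y).2⟩⟩ := by
        refine Prod.ext (Subtype.ext ?_) (Subtype.ext ?_)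
        · exact congrArg Prod.fst hxy
        · exact congrArg Prod.snd hxy
      have h2' := hγinj h1'
      apply Subtype.ext
      refine Prod.ext ?_ ?_
      · exact congrArg (fun z => z.1.1) h2'
      · exact congrArg (fun z => z.2.1) h2'
    have hmapst : ∀ x ∈ s.attach, Γ x ∈ t := by
      intro x _
      rw [ht, Finset.mem_product]
      exact ⟨Finset.Nat.mem_antidiagonalTuple.mpr (γ _).1.2,
        Finset.Nat.mem_antidiagonalTuple.mpr (γ _).2.2⟩
    have step2 : ∑ x ∈ s.attach, w (Γ x) ≤ ∑ y ∈ t, w y := by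
      rw [← Finset.sum_image hΓinj]
      apply Finset.sum_le_sum_of_subset_of_nonneg
      · intro y hy
        obtain ⟨x, hx, rfl⟩ := Finset.mem_image.mp hy
        exact hmapst x hx
      · intro y _ _
        exact mul_nonneg (Finset.prod_nonneg fun i _ => hpos _)
          (Finset.prod_nonneg fun i _ => hpos _)
    have main := step1.trans step2
    rw [← h1, ← h2] at main
    linarith
end
end
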